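/- arXiv:1309.2377 — 5 statements merged into one kernel-verified Lean document; each statement's English description precedes it below -/
import Mathlib

section
/- Let K be a field of characteristic p > 0, n ≥ 1, and for each i let Eⁱ_n(K) denote the subgroup of K-algebra automorphisms of K[x₁,…,x_n] over the subring K[x₁,…,x_{i−1},x_{i+1},…,x_n] (i.e. fixing x_j for all j ≠ i). Let 𝒜 be a subgroup of Aut_K K[x₁,…,x_n] containing Aff_n(K). If 𝒜 ⊆ ⟨Aff_n(K), E¹_n(K)∩𝒜, …, Eⁿ_n(K)∩𝒜⟩, then 𝒜 = ⟨Aff_n(K), BA_n(K) ∩ 𝒜⟩. -/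
open MvPolynomial Pointwise

noncomputable section

/-- The group of `R`-algebra automorphisms of the polynomial ring in `n` variables over `R`. -/
abbrev PolyAut (R : Type*) [CommRing R] (n : ℕ) :=
  MvPolynomial (Fin n) R ≃ₐ[R] MvPolynomial (Fin n) R

variable {R : Type*} [CommRing R]

/-- The set of affine automorphisms. -/
def affSet (R : Type*) [CommRing R] (n : ℕ) : Set (PolyAut R n) :=
  {φ | ∃ M : Matrix (Fin n) (Fin n) R, ∃ b : Fin n → R, IsUnit M.det ∧
    ∀ i, φ (X i) = (∑ j, C (M j i) * X j) + C (b i)}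

/-- The set of elementary automorphisms. -/
def elemSet (R : Type*) [CommRing R] (n : ℕ) : Set (PolyAut R n) :=
  {φ | ∃ l : Fin n, ∃ a : Rˣ, ∃ f : MvPolynomial (Fin n) R,
    f ∈ supported R ({l}ᶜ : Set (Fin n)) ∧ φ (X l) = C (a : R) * X l + f ∧
    ∀ i, i ≠ l → φ (X i) = X i}

/-- The tame subgroup. -/
def tameSubgroup (R : Type*) [CommRing R] (n : ℕ) : Subgroup (PolyAut R n) :=
  Subgroup.closure (affSet R n ∪ elemSet R n)

/-- The set of triangular (de Jonquières) automorphisms. -/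
def triSet (R : Type*) [CommRing R] (n : ℕ) : Set (PolyAut R n) :=
  {φ | ∀ i, φ (X i) ∈ supported R {j : Fin n | i ≤ j}}

/-- A polynomial `f` is additive if `f(y+z) = f(y) + f(z)`. -/
def IsAdditive {R : Type*} [CommRing R] {n : ℕ} (f : MvPolynomial (Fin n) R) : Prop :=
  aeval (fun i => X (Sum.inl i) + X (Sum.inr i)) f =
    aeval (fun i => (X (Sum.inl i) : MvPolynomial (Fin n ⊕ Fin n) R)) f +
      aeval (fun i => (X (Sum.inr i) : MvPolynomial (Fin n ⊕ Fin n) R)) f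

/-- The set of automorphisms with all components additive. -/
def addSet (R : Type*) [CommRing R] (n : ℕ) : Set (PolyAut R n) :=
  {φ | ∀ i, IsAdditive (φ (X i))}

/-- The set of translations. -/
def translSet (R : Type*) [CommRing R] (n : ℕ) : Set (PolyAut R n) :=
  {φ | ∃ b : Fin n → R, ∀ i, φ (X i) = X i + C (b i)}

/-- The geometrically affine subgroup. -/
def affGSubgroup (R : Type*) [CommRing R] (n : ℕ) : Subgroup (PolyAut R n) :=
  Subgroup.closure (addSet R n ∪ translSet R n)

/-- The set of differentially affine automorphisms: all entries of the Jacobian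
matrix are constants. -/
def diffSet (R : Type*) [CommRing R] (n : ℕ) : Set (PolyAut R n) :=
  {φ | ∀ i j : Fin n, ∃ c : R, pderiv j (φ (X i)) = C c}

/-- The geometrically tame subgroup. -/
def tameGSubgroup (R : Type*) [CommRing R] (n : ℕ) : Subgroup (PolyAut R n) :=
  affGSubgroup R n ⊔ tameSubgroup R n

/-- The differentially tame subgroup. -/
def tameDSubgroup (R : Type*) [CommRing R] (n : ℕ) : Subgroup (PolyAut R n) :=
  Subgroup.closure (diffSet R n) ⊔ tameSubgroup R n


/-- The subgroup `Eⁱ_n(K)` of automorphisms over `K[x₁,…,x̂ᵢ,…,x_n]`, i.e. fixing `x_j` for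
all `j ≠ i`, as a set. -/
def EISet (K : Type*) [CommRing K] (n : ℕ) (i : Fin n) : Set (PolyAut K n) :=
  {φ | ∀ j, j ≠ i → φ (X j) = X j}


/-- Any permutation of the variables is an affine automorphism. -/
lemma perm_mem_affSet (R : Type*) [Field R] (n : ℕ) (e : Equiv.Perm (Fin n)) :
    (renameEquiv R e : PolyAut R n) ∈ affSet R n := by
  refine ⟨e⁻¹.permMatrix R, 0, ?_, ?_⟩
  · rw [Matrix.det_permutation]
    exact (Int.isUnit_iff.mpr
      (Int.units_eq_one_or _ |>.imp Units.ext_iff.mp Units.ext_iff.mp)).map (Int.castRingHom R)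
  · intro k
    simp [Equiv.Perm.permMatrix, PEquiv.toMatrix_apply, Equiv.toPEquiv_apply, apply_ite C,
      ite_mul, Finset.sum_ite_eq', Equiv.Perm.inv_eq_iff_eq, Equiv.symm_apply_eq]

/-- **Edo–Kuroda, Lemma 2.2.**  Over a field `K` of characteristic `p > 0`, if a subgroup
`𝒜` of `Aut_K K[x₁,…,x_n]` contains `Aff_n(K)` and is contained in
`⟨Aff_n(K), E¹_n(K)∩𝒜, …, Eⁿ_n(K)∩𝒜⟩`, then `𝒜 = ⟨Aff_n(K), BA_n(K) ∩ 𝒜⟩`. -/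
theorem subgroup_eq_closure_aff_triangular_of_elementary
    (K : Type*) [Field K] (p : ℕ) (hp : 0 < p) [CharP K p] (n : ℕ) (hn : 1 ≤ n)
    (𝒜 : Subgroup (PolyAut K n))
    (haff : affSet K n ⊆ (𝒜 : Set (PolyAut K n)))
    (hsub : (𝒜 : Set (PolyAut K n)) ⊆
      (Subgroup.closure (affSet K n ∪
        ⋃ i : Fin n, (EISet K n i ∩ (𝒜 : Set (PolyAut K n)))) : Subgroup (PolyAut K n))) :
    𝒜 = Subgroup.closure (affSet K n ∪ (triSet K n ∩ (𝒜 : Set (PolyAut K n)))) := by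
  apply le_antisymm
  · intro x hx
    refine (Subgroup.closure_le _).mpr ?_ (hsub hx)
    refine Set.union_subset (fun φ hφ => Subgroup.subset_closure (Or.inl hφ)) ?_
    rintro φ hφ
    obtain ⟨i, hE, hA⟩ := Set.mem_iUnion.mp hφ
    set z : Fin n := ⟨0, hn⟩ with hz
    set e : Equiv.Perm (Fin n) := Equiv.swap z i with he
    set τ : PolyAut K n := (renameEquiv K e : PolyAut K n) with hτ
    have hτaff : τ ∈ affSet K n := perm_mem_affSet K n e
    have hτG : τ ∈ Subgroup.closure (affSet K n ∪ (triSet K n ∩ (𝒜 : Set (PolyAut K n)))) :=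
      Subgroup.subset_closure (Or.inl hτaff)
    have hτA : τ ∈ 𝒜 := haff hτaff
    have hψA : τ⁻¹ * φ * τ ∈ 𝒜 := mul_mem (mul_mem (inv_mem hτA) hA) hτA
    have hψtri : τ⁻¹ * φ * τ ∈ triSet K n := by
      intro j
      by_cases hj : j = z
      · subst hj
        have : {k : Fin n | z ≤ k} = Set.univ := by
          ext k; simp [hz, Fin.le_def]
        rw [this, supported_univ]
        trivial
      · have hval : (τ⁻¹ * φ * τ) (X j) = X j := by
          have h1 : τ (X j) = X (e j) := by simp [hτ]
          have hne : e j ≠ i := by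
            intro hcon
            apply hj
            have : e j = e z := by rw [hcon, he]; simp [Equiv.swap_apply_left]
            exact e.injective this
          have h2 : φ (X (e j)) = X (e j) := hE _ hne
          show τ.symm (φ (τ (X j))) = X j
          rw [h1, h2]
          simp [hτ]
        rw [hval, X_mem_supported]
        exact le_refl j
    have : φ = τ * (τ⁻¹ * φ * τ) * τ⁻¹ := by group
    rw [this]
    exact mul_mem (mul_mem hτG (Subgroup.subset_closure (Or.inr ⟨hψtri, hψA⟩)))
      (inv_mem hτG)
  · exact (Subgroup.closure_le _).mpr (Set.union_subset haff Set.inter_subset_right)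
end
end

section
/- In the amalgamated-product setting (𝒢 = 𝒜 *_∩ ℬ, ℋ an (𝒜,ℬ)-compatible subgroup, G a subgroup of 𝒢, A = 𝒜∩G, B = ℬ∩G, H = ℋ∩G, T = ⟨A,B⟩): let h ∈ ⟨H,T⟩ and let (θ₁,…,θ_m) be a reduced (𝒜,ℬ)-decomposition of h, and let i ∈ {1,…,m} be such that θ_i ∈ ℬ. Then: (1) if i = 1 then θ₁ ∈ B·(ℬ∩ℋ); (2) if i = m then θ_m ∈ (ℬ∩ℋ)·B; (3) if 1 < i < m then θ_i ∈ (ℬ∩ℋ)·B·(ℬ∩ℋ). (Here products denote setwise products of subsets of 𝒢.) -/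
open Pointwise

section Amalgam

variable {G : Type*} [Group G]

/-- `(A,B)`-reduced words: nonempty, every letter in `(A∖B) ∪ (B∖A)`, and no product of
consecutive letters in `A ∪ B`. -/
def IsReducedWord (A B : Set G) (w : List G) : Prop :=
  w ≠ [] ∧ (∀ x ∈ w, x ∈ (A \ B) ∪ (B \ A)) ∧
    List.Chain' (fun a b => a * b ∉ A ∪ B) w

/-- `⟨A,B⟩` is the amalgamated product of `A` and `B` over `A ∩ B`: no nonempty reduced
word has product `1`. -/
def IsAmalgamated (A B : Set G) : Prop :=
  ∀ w : List G, IsReducedWord A B w → w.prod ≠ 1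

/-- A reduced `(A,B)`-decomposition of `γ`. -/
def IsReducedDecomp (A B : Set G) (γ : G) (w : List G) : Prop :=
  IsReducedWord A B w ∧ w.prod = γ

end Amalgam

namespace EK
variable {𝒢 : Type*} [Group 𝒢]

section Basics
variable (𝒜 ℬ : Subgroup 𝒢)

def Ltr (x : 𝒢) : Prop := x ∈ ((𝒜 : Set 𝒢) \ (ℬ : Set 𝒢)) ∪ ((ℬ : Set 𝒢) \ (𝒜 : Set 𝒢))

def Rel (a b : 𝒢) : Prop := a * b ∉ (𝒜 : Set 𝒢) ∪ (ℬ : Set 𝒢)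

variable {𝒜 ℬ}

lemma ltr_iff {x : 𝒢} : Ltr 𝒜 ℬ x ↔ (x ∈ 𝒜 ∧ x ∉ ℬ) ∨ (x ∈ ℬ ∧ x ∉ 𝒜) := by
  simp [Ltr, Set.mem_union, Set.mem_diff, SetLike.mem_coe]

lemma rel_iff {a b : 𝒢} : Rel 𝒜 ℬ a b ↔ (a * b ∉ 𝒜 ∧ a * b ∉ ℬ) := by
  simp [Rel, Set.mem_union, SetLike.mem_coe, not_or]

lemma ltr_symm {x : 𝒢} (h : Ltr 𝒜 ℬ x) : Ltr ℬ 𝒜 x := by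
  rw [ltr_iff] at h ⊢; tauto

lemma rel_symm {a b : 𝒢} (h : Rel 𝒜 ℬ a b) : Rel ℬ 𝒜 a b := by
  rw [rel_iff] at h ⊢; tauto

lemma reduced_iff {w : List 𝒢} :
    IsReducedWord (𝒜 : Set 𝒢) (ℬ : Set 𝒢) w ↔
      w ≠ [] ∧ (∀ x ∈ w, Ltr 𝒜 ℬ x) ∧ List.Chain' (Rel 𝒜 ℬ) w := Iff.rfl

lemma reducedWord_symm {w : List 𝒢} (h : IsReducedWord (𝒜 : Set 𝒢) (ℬ : Set 𝒢) w) :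
    IsReducedWord (ℬ : Set 𝒢) (𝒜 : Set 𝒢) w := by
  obtain ⟨h1, h2, h3⟩ := h
  refine ⟨h1, fun x hx => ltr_symm (h2 x hx), ?_⟩
  exact List.IsChain.imp (fun ⦃a b⦄ hab => rel_symm hab) h3

lemma amalgamated_symm (h : IsAmalgamated (𝒜 : Set 𝒢) (ℬ : Set 𝒢)) :
    IsAmalgamated (ℬ : Set 𝒢) (𝒜 : Set 𝒢) :=
  fun w hw => h w (reducedWord_symm hw)

lemma rel_of_diff_factor {a b : 𝒢}
    (h : (a ∈ 𝒜 ∧ b ∉ 𝒜 ∧ b ∈ ℬ ∧ a ∉ ℬ) ∨ (a ∈ ℬ ∧ b ∉ ℬ ∧ b ∈ 𝒜 ∧ a ∉ 𝒜)) :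
    Rel 𝒜 ℬ a b := by
  rw [rel_iff]
  rcases h with ⟨ha, hb, hb', ha'⟩ | ⟨ha, hb, hb', ha'⟩
  · constructor
    · intro hab; exact hb (by simpa using mul_mem (inv_mem ha) hab)
    · intro hab; exact ha' (by simpa using mul_mem hab (inv_mem hb'))
  · constructor
    · intro hab; exact ha' (by simpa using mul_mem hab (inv_mem hb'))
    · intro hab; exact hb (by simpa using mul_mem (inv_mem ha) hab)

lemma factor_of_rel_right {a b : 𝒢} (hab : Rel 𝒜 ℬ a b) (ha : Ltr 𝒜 ℬ a) :
    (b ∈ 𝒜 → (a ∈ ℬ ∧ a ∉ 𝒜)) ∧ (b ∈ ℬ → (a ∈ 𝒜 ∧ a ∉ ℬ)) := by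
  rw [rel_iff] at hab
  rw [ltr_iff] at ha
  constructor
  · intro hbA
    rcases ha with ⟨h1, h2⟩ | ⟨h1, h2⟩
    · exact absurd (mul_mem h1 hbA) hab.1
    · exact ⟨h1, h2⟩
  · intro hbB
    rcases ha with ⟨h1, h2⟩ | ⟨h1, h2⟩
    · exact ⟨h1, h2⟩
    · exact absurd (mul_mem h1 hbB) hab.2

lemma factor_of_rel_left {a b : 𝒢} (hab : Rel 𝒜 ℬ a b) (hb : Ltr 𝒜 ℬ b) :
    (a ∈ 𝒜 → (b ∈ ℬ ∧ b ∉ 𝒜)) ∧ (a ∈ ℬ → (b ∈ 𝒜 ∧ b ∉ ℬ)) := by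
  rw [rel_iff] at hab
  rw [ltr_iff] at hb
  constructor
  · intro haA
    rcases hb with ⟨h1, h2⟩ | ⟨h1, h2⟩
    · exact absurd (mul_mem haA h1) hab.1
    · exact ⟨h1, h2⟩
  · intro haB
    rcases hb with ⟨h1, h2⟩ | ⟨h1, h2⟩
    · exact ⟨h1, h2⟩
    · exact absurd (mul_mem haB h1) hab.2

lemma snoc_inj {x y : List 𝒢} {a b : 𝒢} (h : x ++ [a] = y ++ [b]) : x = y ∧ a = b := by
  have h1 := congrArg List.reverse h
  simp at h1
  obtain ⟨h2, h3⟩ := h1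
  exact ⟨by simpa using congrArg List.reverse h3, h2⟩

lemma prod_snoc (x : List 𝒢) (a : 𝒢) : (x ++ [a]).prod = x.prod * a := by
  simp

lemma snoc_cases (l : List 𝒢) : l = [] ∨ ∃ L b, l = L ++ [b] := by
  rcases List.eq_nil_or_concat l with h | ⟨L, b, h⟩
  · exact Or.inl h
  · exact Or.inr ⟨L, b, by simpa using h⟩

end Basics

section Words
variable {𝒜 ℬ : Subgroup 𝒢}

/-- surgery: prefix of reduced snoc is reduced -/
lemma red_of_snoc {x : List 𝒢} {a : 𝒢} (h : IsReducedWord (𝒜 : Set 𝒢) ℬ (x ++ [a]))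
    (hx : x ≠ []) : IsReducedWord (𝒜 : Set 𝒢) ℬ x := by
  obtain ⟨-, h2, h3⟩ := h
  exact ⟨hx, fun y hy => h2 y (by simp [hy]), (List.isChain_append.mp h3).1⟩

lemma ltr_last_of_snoc {x : List 𝒢} {a : 𝒢} (h : IsReducedWord (𝒜 : Set 𝒢) ℬ (x ++ [a])) :
    Ltr 𝒜 ℬ a := h.2.1 a (by simp)

lemma rel_junction {x : List 𝒢} {d a : 𝒢} (h : IsReducedWord (𝒜 : Set 𝒢) ℬ (x ++ [d] ++ [a])) :
    Rel 𝒜 ℬ d a := by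
  have := (List.isChain_append.mp h.2.2).2.2
  simp at this
  rw [rel_iff]
  exact this

/-- build a reduced snoc -/
lemma red_snoc_build {x : List 𝒢} {a : 𝒢} (hx : IsReducedWord (𝒜 : Set 𝒢) ℬ x)
    (ha : Ltr 𝒜 ℬ a) (hj : ∀ y d, x = y ++ [d] → Rel 𝒜 ℬ d a) :
    IsReducedWord (𝒜 : Set 𝒢) ℬ (x ++ [a]) := by
  refine ⟨by simp, ?_, ?_⟩
  · intro y hy
    rcases List.mem_append.mp hy with hy | hy
    · exact hx.2.1 y hy
    · simp at hy; subst hy; exact ha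
  · unfold List.Chain'; rw [List.isChain_append]
    refine ⟨hx.2.2, List.isChain_singleton a, ?_⟩
    intro d hd y hy
    simp at hy; subst hy
    rcases List.eq_nil_or_concat x with rfl | ⟨L, b, rfl⟩
    · simp at hd
    · rw [List.concat_eq_append, List.getLast?_concat] at hd
      simp only [Option.mem_def, Option.some.injEq] at hd
      subst hd
      exact hj L b (by simp)

/-- singleton reduced -/
lemma red_singleton {a : 𝒢} (ha : Ltr 𝒜 ℬ a) : IsReducedWord (𝒜 : Set 𝒢) ℬ [a] := by
  refine ⟨by simp, ?_, List.isChain_singleton _⟩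
  intro y hy; simp at hy; subst hy; exact ha

end Words

section Words2
variable {𝒜 ℬ : Subgroup 𝒢}

/-- inverse-reverse of a word -/
def winv (w : List 𝒢) : List 𝒢 := w.reverse.map (fun x => x⁻¹)

lemma winv_nil : winv ([] : List 𝒢) = [] := rfl

lemma winv_snoc (x : List 𝒢) (a : 𝒢) : winv (x ++ [a]) = a⁻¹ :: winv x := by
  simp [winv]

lemma prod_winv (w : List 𝒢) : (winv w).prod = w.prod⁻¹ := by
  rw [winv, List.map_reverse]
  exact (List.prod_inv_reverse w).symm

lemma ltr_inv {a : 𝒢} (h : Ltr 𝒜 ℬ a) : Ltr 𝒜 ℬ a⁻¹ := by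
  rw [ltr_iff] at h ⊢
  rcases h with ⟨h1, h2⟩ | ⟨h1, h2⟩
  · exact Or.inl ⟨inv_mem h1, fun hc => h2 (by simpa using inv_mem hc)⟩
  · exact Or.inr ⟨inv_mem h1, fun hc => h2 (by simpa using inv_mem hc)⟩

lemma rel_inv {a b : 𝒢} (h : Rel 𝒜 ℬ a b) : Rel 𝒜 ℬ b⁻¹ a⁻¹ := by
  rw [rel_iff] at h ⊢
  constructor
  · intro hc; exact h.1 (by simpa using inv_mem hc)
  · intro hc; exact h.2 (by simpa using inv_mem hc)

lemma red_winv {w : List 𝒢} (h : IsReducedWord (𝒜 : Set 𝒢) ℬ w) :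
    IsReducedWord (𝒜 : Set 𝒢) ℬ (winv w) := by
  obtain ⟨h1, h2, h3⟩ := h
  refine ⟨by simp [winv, h1], ?_, ?_⟩
  · intro y hy
    simp only [winv, List.mem_map, List.mem_reverse] at hy
    obtain ⟨z, hz, rfl⟩ := hy
    exact ltr_inv (h2 z hz)
  · rw [winv]; unfold List.Chain'; rw [List.isChain_map, List.isChain_reverse]
    exact List.IsChain.imp (fun ⦃a b⦄ hab => rel_inv hab) h3

/-- products of reduced words of length ≥ 2 are not in 𝒜 ∪ ℬ -/
lemma prod_notin_union (ham : IsAmalgamated (𝒜 : Set 𝒢) ℬ) :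
    ∀ w : List 𝒢, IsReducedWord (𝒜 : Set 𝒢) ℬ w → 2 ≤ w.length →
      w.prod ∉ ((𝒜 : Set 𝒢) ∪ ℬ) := by
  intro w
  induction w using List.reverseRecOn with
  | nil => intro _ h2; simp at h2
  | append_singleton x a IH =>
    intro hred hlen hmem
    have hxne : x ≠ [] := by
      intro hx; subst hx; simp at hlen
    obtain ⟨y, d, rfl⟩ : ∃ y d, x = y ++ [d] := by
      rcases snoc_cases x with h | h
      · exact absurd h hxne
      · exact h
    have hredx : IsReducedWord (𝒜 : Set 𝒢) ℬ (y ++ [d]) := red_of_snoc hred (by simp)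
    have hla : Ltr 𝒜 ℬ a := ltr_last_of_snoc hred
    have hrel : Rel 𝒜 ℬ d a := rel_junction hred
    set p := ((y ++ [d]) ++ [a]).prod with hp
    have hp1 : p = (y ++ [d]).prod * a := by rw [hp]; exact prod_snoc _ _
    have hpx : (y ++ [d]).prod = p * a⁻¹ := by rw [hp1]; group
    -- case split: common factor or not
    have hdesc : ∀ (F : Subgroup 𝒢), (F = 𝒜 ∨ F = ℬ) → p ∈ F → a ∈ F → False := by
      intro F hF hpF haF
      rcases snoc_cases y with rfl | ⟨z, e, rfl⟩
      · -- x = [d] : w = [d, a], p = d * a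
        have hda : p = d * a := by simp [hp]
        have := rel_iff.mp hrel
        rcases hF with rfl | rfl
        · exact this.1 (hda ▸ hpF)
        · exact this.2 (hda ▸ hpF)
      · -- length x ≥ 2, descend
        have h2 : 2 ≤ ((z ++ [e]) ++ [d]).length := by simp
        have hq : ((z ++ [e]) ++ [d]).prod ∈ ((𝒜 : Set 𝒢) ∪ ℬ) := by
          rw [hpx]
          rcases hF with rfl | rfl
          · exact Or.inl (mul_mem hpF (inv_mem haF))
          · exact Or.inr (mul_mem hpF (inv_mem haF))
        exact IH hredx h2 hq
    -- now: a is in some factor; p in some factor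
    rw [ltr_iff] at hla
    rcases hla with ⟨haA, haB⟩ | ⟨haB, haA⟩
    · by_cases hpA : p ∈ 𝒜
      · exact hdesc 𝒜 (Or.inl rfl) hpA haA
      · have hpB : p ∈ ℬ := by
          rcases hmem with h | h
          · exact absurd h hpA
          · exact h
        -- append p⁻¹
        have hlp : Ltr 𝒜 ℬ p⁻¹ := by
          rw [ltr_iff]
          exact Or.inr ⟨inv_mem hpB, fun hc => hpA (by simpa using inv_mem hc)⟩
        have hrel2 : Rel 𝒜 ℬ a p⁻¹ := by
          apply rel_of_diff_factor
          exact Or.inl ⟨haA, fun hc => hpA (by simpa using inv_mem hc), inv_mem hpB, haB⟩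
        have hW : IsReducedWord (𝒜 : Set 𝒢) ℬ (((y ++ [d]) ++ [a]) ++ [p⁻¹]) := by
          refine red_snoc_build hred hlp ?_
          intro u v huv
          obtain ⟨h1, h2⟩ := snoc_inj huv
          subst h2
          exact hrel2
        have : ((((y ++ [d]) ++ [a]) ++ [p⁻¹])).prod = 1 := by
          rw [prod_snoc, ← hp]; group
        exact ham _ hW this
    · by_cases hpB : p ∈ ℬ
      · exact hdesc ℬ (Or.inr rfl) hpB haB
      · have hpA : p ∈ 𝒜 := by
          rcases hmem with h | h
          · exact h
          · exact absurd h hpB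
        have hlp : Ltr 𝒜 ℬ p⁻¹ := by
          rw [ltr_iff]
          exact Or.inl ⟨inv_mem hpA, fun hc => hpB (by simpa using inv_mem hc)⟩
        have hrel2 : Rel 𝒜 ℬ a p⁻¹ := by
          apply rel_of_diff_factor
          exact Or.inr ⟨haB, fun hc => hpB (by simpa using inv_mem hc), inv_mem hpA, haA⟩
        have hW : IsReducedWord (𝒜 : Set 𝒢) ℬ (((y ++ [d]) ++ [a]) ++ [p⁻¹]) := by
          refine red_snoc_build hred hlp ?_
          intro u v huv
          obtain ⟨h1, h2⟩ := snoc_inj huv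
          subst h2
          exact hrel2
        have : ((((y ++ [d]) ++ [a]) ++ [p⁻¹])).prod = 1 := by
          rw [prod_snoc, ← hp]; group
        exact ham _ hW this

/-- products of reduced words are never in 𝒜 ⊓ ℬ -/
lemma prod_notin_core (ham : IsAmalgamated (𝒜 : Set 𝒢) ℬ) {w : List 𝒢}
    (hred : IsReducedWord (𝒜 : Set 𝒢) ℬ w) : w.prod ∉ 𝒜 ⊓ ℬ := by
  intro hmem
  rcases Nat.lt_or_ge w.length 2 with hlen | hlen
  · -- length 1
    obtain ⟨a, rfl⟩ : ∃ a, w = [a] := by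
      match w, hred.1, hlen with
      | [a], _, _ => exact ⟨a, rfl⟩
    have hl : Ltr 𝒜 ℬ a := hred.2.1 a (by simp)
    rw [ltr_iff] at hl
    simp only [List.prod_cons, List.prod_nil, mul_one] at hmem
    rcases hl with ⟨h1, h2⟩ | ⟨h1, h2⟩
    · exact h2 hmem.2
    · exact h2 hmem.1
  · exact prod_notin_union ham w hred hlen (Or.inl hmem.1)

end Words2


section Unique
variable {𝒜 ℬ : Subgroup 𝒢}

lemma red_append {x y : List 𝒢} (hx : IsReducedWord (𝒜 : Set 𝒢) ℬ x)
    (hy : IsReducedWord (𝒜 : Set 𝒢) ℬ y)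
    (hj : ∀ d, x.getLast? = some d → ∀ z, y.head? = some z → Rel 𝒜 ℬ d z) :
    IsReducedWord (𝒜 : Set 𝒢) ℬ (x ++ y) := by
  refine ⟨by simp [hx.1], ?_, ?_⟩
  · intro u hu
    rcases List.mem_append.mp hu with h | h
    · exact hx.2.1 u h
    · exact hy.2.1 u h
  · unfold List.Chain'; rw [List.isChain_append]
    exact ⟨hx.2.2, hy.2.2, fun d hd z hz => hj d hd z hz⟩

lemma red_snocC {y : List 𝒢} {d c : 𝒢} (h : IsReducedWord (𝒜 : Set 𝒢) ℬ (y ++ [d]))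
    (hc : c ∈ 𝒜 ⊓ ℬ) : IsReducedWord (𝒜 : Set 𝒢) ℬ (y ++ [d * c]) := by
  have hld : Ltr 𝒜 ℬ d := ltr_last_of_snoc h
  have hldc : Ltr 𝒜 ℬ (d * c) := by
    rw [ltr_iff] at hld ⊢
    rcases hld with ⟨h1, h2⟩ | ⟨h1, h2⟩
    · exact Or.inl ⟨mul_mem h1 hc.1, fun hcon => h2 (by simpa using mul_mem hcon (inv_mem hc.2))⟩
    · exact Or.inr ⟨mul_mem h1 hc.2, fun hcon => h2 (by simpa using mul_mem hcon (inv_mem hc.1))⟩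
  rcases snoc_cases y with rfl | ⟨z, e, rfl⟩
  · simpa using red_singleton hldc
  · refine red_snoc_build (red_of_snoc h (by simp)) hldc ?_
    intro u v huv
    obtain ⟨h1, h2⟩ := snoc_inj huv
    subst h2
    have hre : Rel 𝒜 ℬ e d := rel_junction h
    rw [rel_iff] at hre ⊢
    constructor
    · intro hcon
      exact hre.1 (by simpa [mul_assoc] using mul_mem hcon (inv_mem hc.1))
    · intro hcon
      exact hre.2 (by simpa [mul_assoc] using mul_mem hcon (inv_mem hc.2))

/-- two reduced words with equal products and last letters in "different factors": impossible -/
lemma no_diff (ham : IsAmalgamated (𝒜 : Set 𝒢) ℬ) {v' w' : List 𝒢} {a b : 𝒢}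
    (hv : IsReducedWord (𝒜 : Set 𝒢) ℬ (v' ++ [a]))
    (hw : IsReducedWord (𝒜 : Set 𝒢) ℬ (w' ++ [b]))
    (hp : (v' ++ [a]).prod = (w' ++ [b]).prod)
    (ha : a ∈ 𝒜 ∧ a ∉ ℬ) (hb : b ∈ ℬ ∧ b ∉ 𝒜) : False := by
  have hW : IsReducedWord (𝒜 : Set 𝒢) ℬ ((v' ++ [a]) ++ winv (w' ++ [b])) := by
    refine red_append hv (red_winv hw) ?_
    intro d hd z hz
    rw [List.getLast?_concat] at hd
    rw [winv_snoc] at hz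
    simp only [Option.mem_def, Option.some.injEq, List.head?_cons] at hd hz
    subst hd; subst hz
    exact rel_of_diff_factor (Or.inl ⟨ha.1, fun hcon => hb.2 (by simpa using inv_mem hcon),
      inv_mem hb.1, ha.2⟩)
  apply ham _ hW
  rw [List.prod_append, prod_winv, hp]
  group

/-- two reduced words with equal products, last letters both in 𝒜∖ℬ, with a*b⁻¹ ∉ ℬ:
impossible -/
lemma no_nonC (ham : IsAmalgamated (𝒜 : Set 𝒢) ℬ) {v' w' : List 𝒢} {a b : 𝒢}
    (hv : IsReducedWord (𝒜 : Set 𝒢) ℬ (v' ++ [a]))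
    (hw : IsReducedWord (𝒜 : Set 𝒢) ℬ (w' ++ [b]))
    (hp : (v' ++ [a]).prod = (w' ++ [b]).prod)
    (ha : a ∈ 𝒜 ∧ a ∉ ℬ) (hb : b ∈ 𝒜 ∧ b ∉ ℬ) (hcB : a * b⁻¹ ∉ ℬ) : False := by
  set c := a * b⁻¹ with hc
  have hcA : c ∈ 𝒜 := mul_mem ha.1 (inv_mem hb.1)
  have hlc : Ltr 𝒜 ℬ c := ltr_iff.mpr (Or.inl ⟨hcA, hcB⟩)
  have hrel : v'.prod * c = w'.prod := by
    have h1 : v'.prod * a = w'.prod * b := by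
      rw [← prod_snoc, ← prod_snoc]; exact hp
    rw [hc, ← mul_assoc, h1]; group
  -- junction facts
  have hjv : ∀ y d, v' = y ++ [d] → Rel 𝒜 ℬ d c := by
    intro y d hy
    subst hy
    have hrd : Rel 𝒜 ℬ d a := rel_junction hv
    have hdf := (factor_of_rel_right hrd (ltr_last_of_snoc (red_of_snoc hv (by simp)))).1 ha.1
    exact rel_of_diff_factor (Or.inr ⟨hdf.1, hcB, hcA, hdf.2⟩)
  have hjw : ∀ y d, w' = y ++ [d] → Rel 𝒜 ℬ c d⁻¹ := by
    intro y d hy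
    subst hy
    have hrd : Rel 𝒜 ℬ d b := rel_junction hw
    have hdf := (factor_of_rel_right hrd (ltr_last_of_snoc (red_of_snoc hw (by simp)))).1 hb.1
    refine rel_of_diff_factor (Or.inl ⟨hcA, ?_, inv_mem hdf.1, hcB⟩)
    intro hcon; exact hdf.2 (by simpa using inv_mem hcon)
  rcases snoc_cases v' with rfl | ⟨y, d, rfl⟩
  · rcases snoc_cases w' with rfl | ⟨y₂, d₂, rfl⟩
    · -- both empty : c = 1 ∈ ℬ
      apply hcB
      have : c = 1 := by simpa using hrel
      rw [this]; exact one_mem ℬ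
    · -- W = [c] ++ winv w'
      have hW : IsReducedWord (𝒜 : Set 𝒢) ℬ ([c] ++ winv (y₂ ++ [d₂])) := by
        refine red_append (red_singleton hlc) (red_winv (red_of_snoc hw (by simp))) ?_
        intro d hd z hz
        simp only [List.getLast?_singleton, Option.mem_def, Option.some.injEq] at hd
        rw [winv_snoc] at hz
        simp only [List.head?_cons, Option.mem_def, Option.some.injEq] at hz
        subst hd; subst hz
        exact hjw y₂ d₂ rfl
      apply ham _ hW
      rw [List.prod_append, prod_winv]
      simp only [List.prod_singleton]
      rw [show c = (y₂ ++ [d₂]).prod by simpa using hrel]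
      group
  · rcases snoc_cases w' with rfl | ⟨y₂, d₂, rfl⟩
    · -- W = v' ++ [c]
      have hW : IsReducedWord (𝒜 : Set 𝒢) ℬ ((y ++ [d]) ++ [c]) := by
        refine red_snoc_build (red_of_snoc hv (by simp)) hlc ?_
        intro u e hue
        obtain ⟨h1, h2⟩ := snoc_inj hue
        subst h2
        exact hjv u d hue
      apply ham _ hW
      rw [prod_snoc]
      simpa using hrel
    · -- W = (v' ++ [c]) ++ winv w'
      have hW1 : IsReducedWord (𝒜 : Set 𝒢) ℬ ((y ++ [d]) ++ [c]) := by
        refine red_snoc_build (red_of_snoc hv (by simp)) hlc ?_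
        intro u e hue
        obtain ⟨h1, h2⟩ := snoc_inj hue
        subst h2
        exact hjv u d hue
      have hW : IsReducedWord (𝒜 : Set 𝒢) ℬ (((y ++ [d]) ++ [c]) ++ winv (y₂ ++ [d₂])) := by
        refine red_append hW1 (red_winv (red_of_snoc hw (by simp))) ?_
        intro d' hd z hz
        rw [List.getLast?_concat] at hd
        rw [winv_snoc] at hz
        simp only [List.head?_cons, Option.mem_def, Option.some.injEq] at hd hz
        subst hd; subst hz
        exact hjw y₂ d₂ rfl
      apply ham _ hW
      rw [List.prod_append, prod_winv, prod_snoc, hrel]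
      group
  
end Unique


section Unique2
variable {𝒜 ℬ : Subgroup 𝒢}

lemma core_symm {c : 𝒢} (h : c ∈ ℬ ⊓ 𝒜) : c ∈ 𝒜 ⊓ ℬ := ⟨h.2, h.1⟩

lemma same_factor_core (ham : IsAmalgamated (𝒜 : Set 𝒢) ℬ) {v' w' : List 𝒢} {a b : 𝒢}
    (hv : IsReducedWord (𝒜 : Set 𝒢) ℬ (v' ++ [a]))
    (hw : IsReducedWord (𝒜 : Set 𝒢) ℬ (w' ++ [b]))
    (hp : (v' ++ [a]).prod = (w' ++ [b]).prod) :
    a * b⁻¹ ∈ 𝒜 ⊓ ℬ := by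
  have hla := ltr_iff.mp (ltr_last_of_snoc hv)
  have hlb := ltr_iff.mp (ltr_last_of_snoc hw)
  rcases hla with ⟨ha1, ha2⟩ | ⟨ha1, ha2⟩ <;> rcases hlb with ⟨hb1, hb2⟩ | ⟨hb1, hb2⟩
  · refine Subgroup.mem_inf.mpr ⟨mul_mem ha1 (inv_mem hb1), ?_⟩
    by_contra hcB
    exact no_nonC ham hv hw hp ⟨ha1, ha2⟩ ⟨hb1, hb2⟩ hcB
  · exact (no_diff ham hv hw hp ⟨ha1, ha2⟩ ⟨hb1, hb2⟩).elim
  · exact (no_diff (amalgamated_symm ham) (reducedWord_symm hv)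
      (reducedWord_symm hw) hp ⟨ha1, ha2⟩ ⟨hb1, hb2⟩).elim
  · refine Subgroup.mem_inf.mpr ⟨?_, mul_mem ha1 (inv_mem hb1)⟩
    by_contra hcA
    exact no_nonC (amalgamated_symm ham) (reducedWord_symm hv) (reducedWord_symm hw) hp
      ⟨ha1, ha2⟩ ⟨hb1, hb2⟩ hcA

/-- uniqueness of reduced decompositions up to core shifts -/
theorem unique_aux (ham : IsAmalgamated (𝒜 : Set 𝒢) ℬ) :
    ∀ n (w v : List 𝒢), w.length = n →
      IsReducedWord (𝒜 : Set 𝒢) ℬ v → IsReducedWord (𝒜 : Set 𝒢) ℬ w → v.prod = w.prod →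
      v.length = w.length ∧ ∀ j, ((v.take j).prod)⁻¹ * (w.take j).prod ∈ 𝒜 ⊓ ℬ := by
  intro n
  induction n using Nat.strong_induction_on with
  | _ n IH =>
    intro w v hn hv hw hp
    obtain ⟨v', a, rfl⟩ : ∃ v' a, v = v' ++ [a] := by
      rcases snoc_cases v with h | h
      · exact absurd h hv.1
      · exact h
    obtain ⟨w', b, rfl⟩ : ∃ w' b, w = w' ++ [b] := by
      rcases snoc_cases w with h | h
      · exact absurd h hw.1
      · exact h
    have hcC : a * b⁻¹ ∈ 𝒜 ⊓ ℬ := same_factor_core ham hv hw hp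
    set c := a * b⁻¹ with hc
    have hrel : v'.prod * c = w'.prod := by
      have h1 : v'.prod * a = w'.prod * b := by
        rw [← prod_snoc, ← prod_snoc]; exact hp
      rw [hc, ← mul_assoc, h1]; group
    rcases snoc_cases v' with rfl | ⟨y, d, rfl⟩
    · -- v' = [] : w'.prod = c ∈ C, so w' = []
      have hw'nil : w' = [] := by
        by_contra hne
        exact prod_notin_core ham (red_of_snoc hw hne) (by rw [← hrel]; simpa using hcC)
      subst hw'nil
      have hab : a = b := by
        have h1 : c = 1 := by simpa using hrel
        exact mul_inv_eq_one.mp (hc ▸ h1)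
      constructor
      · rfl
      · intro j
        rcases Nat.eq_zero_or_pos j with rfl | hj
        · simpa using (𝒜 ⊓ ℬ).one_mem
        · rw [List.take_of_length_le (by simp; omega), List.take_of_length_le (by simp; omega)]
          simp [hab, (𝒜 ⊓ ℬ).one_mem]
    · -- v' nonempty; w' nonempty too
      have hw'ne : w' ≠ [] := by
        rintro rfl
        have : (y ++ [d]).prod ∈ 𝒜 ⊓ ℬ := by
          have h2 : (y ++ [d]).prod * c = 1 := by simpa using hrel
          rw [eq_inv_of_mul_eq_one_left h2]
          exact inv_mem hcC
        exact prod_notin_core ham (red_of_snoc hv (by simp)) this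
      obtain ⟨y₂, b₂, rfl⟩ : ∃ y₂ b₂, w' = y₂ ++ [b₂] := by
        rcases snoc_cases w' with h | h
        · exact absurd h hw'ne
        · exact h
      -- descend with v₂ = y ++ [d*c]
      have hv₂ : IsReducedWord (𝒜 : Set 𝒢) ℬ (y ++ [d * c]) :=
        red_snocC (red_of_snoc hv (by simp)) hcC
      have hw₂ : IsReducedWord (𝒜 : Set 𝒢) ℬ (y₂ ++ [b₂]) := red_of_snoc hw (by simp)
      have hp₂ : (y ++ [d * c]).prod = (y₂ ++ [b₂]).prod := by
        rw [prod_snoc, ← mul_assoc, ← prod_snoc, hrel]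
      have hlen₂ : (y₂ ++ [b₂]).length = n - 1 := by
        have := hn; simp at this ⊢; omega
      have hlt : n - 1 < n := by
        have := hn; simp at this; omega
      obtain ⟨hL, hpre⟩ := IH (n-1) hlt (y₂ ++ [b₂]) (y ++ [d * c]) hlen₂ hv₂ hw₂ hp₂
      have hylen : y.length = y₂.length := by simpa using hL
      constructor
      · simp [hylen]
      · intro j
        rcases lt_trichotomy j (y.length + 1) with hj | hj | hj
        · -- j ≤ y.length
          have hjy : j ≤ y.length := by omega
          have e1 : ((y ++ [d] ++ [a]).take j) = (y ++ [d * c]).take j := by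
            rw [List.append_assoc, List.take_append_of_le_length hjy,
              List.take_append_of_le_length hjy]
          have e2 : ((y₂ ++ [b₂] ++ [b]).take j) = (y₂ ++ [b₂]).take j := by
            rw [List.take_append_of_le_length (by simp; omega)]
          rw [e1, e2]
          exact hpre j
        · -- j = y.length + 1 : prefix products are v'.prod and w'.prod
          subst hj
          have e1 : ((y ++ [d] ++ [a]).take (y.length + 1)) = y ++ [d] := by
            rw [List.take_append_of_le_length (by simp)]
            simpa using List.take_length (y ++ [d])
          have e2 : ((y₂ ++ [b₂] ++ [b]).take (y.length + 1)) = y₂ ++ [b₂] := by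
            rw [List.take_append_of_le_length (by simp [hylen])]
            rw [hylen]
            simpa using List.take_length (y₂ ++ [b₂])
          rw [e1, e2, ← hrel, inv_mul_cancel_left]
          exact hcC
        · -- j ≥ full length
          rw [List.take_of_length_le (by simp; omega),
            List.take_of_length_le (by simp [← hylen]; omega), hp, inv_mul_cancel]
          exact (𝒜 ⊓ ℬ).one_mem

end Unique2


section Invariant

variable (𝒜 ℬ ℋ G₀ : Subgroup 𝒢)

/-- the key per-position condition -/
def SideOK (g x : 𝒢) : Prop :=
  ∀ F : Subgroup 𝒢, (F = 𝒜 ∨ F = ℬ) → x ∈ F →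
    (x ∈ F ⊓ ℋ ∨ ∃ a ∈ G₀, ∃ y ∈ F ⊓ ℋ, g = a * y)

/-- the invariant on states `(φ, e)` -/
structure Inv (φ : List 𝒢) (e : 𝒢) : Prop where
  he : e ∈ 𝒜 ⊓ ℬ
  hlts : ∀ x ∈ φ, Ltr 𝒜 ℬ x
  hch : List.Chain' (Rel 𝒜 ℬ) φ
  hK : ∀ x d y z, φ = x ++ d :: y :: z →
    SideOK 𝒜 ℬ ℋ G₀ (x.prod * d) d ∧ SideOK 𝒜 ℬ ℋ G₀ (x.prod * d) y
  hlast : ∀ x d, φ = x ++ [d] → SideOK 𝒜 ℬ ℋ G₀ (φ.prod * e) d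

variable {𝒜 ℬ ℋ G₀}

lemma sideOK_swap {g x : 𝒢} (h : SideOK 𝒜 ℬ ℋ G₀ g x) : SideOK ℬ 𝒜 ℋ G₀ g x :=
  fun F hF hx => h F hF.symm hx

lemma inv_swap {φ : List 𝒢} {e : 𝒢} (h : Inv 𝒜 ℬ ℋ G₀ φ e) : Inv ℬ 𝒜 ℋ G₀ φ e := by
  refine ⟨core_symm h.he, fun x hx => ltr_symm (h.hlts x hx),
    List.IsChain.imp (fun ⦃a b⦄ hab => rel_symm hab) h.hch, ?_, ?_⟩
  · intro x d y z hdec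
    obtain ⟨h1, h2⟩ := h.hK x d y z hdec
    exact ⟨sideOK_swap h1, sideOK_swap h2⟩
  · intro x d hdec
    exact sideOK_swap (h.hlast x d hdec)

lemma sideOK_congr {g g' x : 𝒢} (hgg : g = g') (h : SideOK 𝒜 ℬ ℋ G₀ g x) :
    SideOK 𝒜 ℬ ℋ G₀ g' x := hgg ▸ h

lemma sideOK_of_G₀ {g x : 𝒢} (hg : g ∈ G₀) : SideOK 𝒜 ℬ ℋ G₀ g x :=
  fun F _ _ => Or.inr ⟨g, hg, 1, one_mem _, (mul_one g).symm⟩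

lemma sideOK_of_memH {g x : 𝒢} (hx : x ∈ ℋ) : SideOK 𝒜 ℬ ℋ G₀ g x :=
  fun F _ hxF => Or.inl ⟨hxF, hx⟩

lemma sideOK_mulC_right (hC : 𝒜 ⊓ ℬ ≤ ℋ) {g x c : 𝒢} (h : SideOK 𝒜 ℬ ℋ G₀ g x)
    (hc : c ∈ 𝒜 ⊓ ℬ) : SideOK 𝒜 ℬ ℋ G₀ (g * c) x := by
  intro F hF hx
  rcases h F hF hx with hp | ⟨a, ha, y, hy, hg⟩
  · exact Or.inl hp
  · refine Or.inr ⟨a, ha, y * c, mul_mem hy ?_, by rw [hg, mul_assoc]⟩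
    refine Subgroup.mem_inf.mpr ⟨?_, hC hc⟩
    rcases hF with rfl | rfl
    · exact hc.1
    · exact hc.2

lemma sideOK_letter_mulC (hC : 𝒜 ⊓ ℬ ≤ ℋ) {g x c : 𝒢} (h : SideOK 𝒜 ℬ ℋ G₀ g x)
    (hc : c ∈ 𝒜 ⊓ ℬ) : SideOK 𝒜 ℬ ℋ G₀ g (x * c) := by
  intro F hF hxc
  have hcF : c ∈ F := by
    rcases hF with rfl | rfl
    · exact hc.1
    · exact hc.2
  have hx : x ∈ F := by
    have := mul_mem hxc (inv_mem hcF)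
    simpa using this
  rcases h F hF hx with ⟨h1, h2⟩ | hr
  · exact Or.inl ⟨hxc, mul_mem h2 (hC hc)⟩
  · exact Or.inr hr

-- chain helpers
lemma chain_of_snoc {R : 𝒢 → 𝒢 → Prop} {x : List 𝒢} {a : 𝒢}
    (h : List.Chain' R (x ++ [a])) : List.Chain' R x := (List.isChain_append.mp h).1

lemma rel_junction' {R : 𝒢 → 𝒢 → Prop} {x : List 𝒢} {d a : 𝒢}
    (h : List.Chain' R (x ++ [d] ++ [a])) : R d a := by
  have := (List.isChain_append.mp h).2.2
  simp at this
  exact this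

lemma chain_snoc_build {R : 𝒢 → 𝒢 → Prop} {x : List 𝒢} {a : 𝒢} (hx : List.Chain' R x)
    (hj : ∀ y d, x = y ++ [d] → R d a) : List.Chain' R (x ++ [a]) := by
  unfold List.Chain'; rw [List.isChain_append]
  refine ⟨hx, List.isChain_singleton a, ?_⟩
  intro d hd y hy
  simp at hy; subst hy
  rcases snoc_cases x with rfl | ⟨L, b, rfl⟩
  · simp at hd
  · rw [List.getLast?_concat] at hd
    simp only [Option.mem_def, Option.some.injEq] at hd
    subst hd
    exact hj L b rfl

/-- replacing the last letter by one of the same factor preserves the chain condition -/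
lemma chain_modLast {y : List 𝒢} {d d' : 𝒢} (h : List.Chain' (Rel 𝒜 ℬ) (y ++ [d]))
    (hl : ∀ x ∈ y ++ [d], Ltr 𝒜 ℬ x)
    (hf : (d ∈ 𝒜 ∧ d' ∈ 𝒜 ∧ d' ∉ ℬ) ∨ (d ∈ ℬ ∧ d' ∈ ℬ ∧ d' ∉ 𝒜)) :
    List.Chain' (Rel 𝒜 ℬ) (y ++ [d']) := by
  refine chain_snoc_build (chain_of_snoc h) ?_
  intro u e hue
  subst hue
  have hre : Rel 𝒜 ℬ e d := rel_junction' h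
  have hle : Ltr 𝒜 ℬ e := hl e (by simp)
  rcases hf with ⟨hd, hd1, hd2⟩ | ⟨hd, hd1, hd2⟩
  · have he := (factor_of_rel_right hre hle).1 hd
    exact rel_of_diff_factor (Or.inr ⟨he.1, hd2, hd1, he.2⟩)
  · have he := (factor_of_rel_right hre hle).2 hd
    exact rel_of_diff_factor (Or.inl ⟨he.1, hd2, hd1, he.2⟩)

end Invariant


section Step
variable {𝒜 ℬ ℋ G₀ : Subgroup 𝒢}

theorem step_left (hC : 𝒜 ⊓ ℬ ≤ ℋ) {φ : List 𝒢} {e z : 𝒢}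
    (hI : Inv 𝒜 ℬ ℋ G₀ φ e)
    (hz : z ∈ 𝒜 ⊓ ℋ ∨ (z ∈ 𝒜 ⊓ G₀ ∧ φ.prod * e ∈ G₀)) :
    ∃ φ' e', Inv 𝒜 ℬ ℋ G₀ φ' e' ∧ φ'.prod * e' = φ.prod * e * z := by
  have hzA : z ∈ 𝒜 := by rcases hz with h | h; exacts [h.1, h.1.1]
  have heH : e ∈ ℋ := hC hI.he
  have heA : e ∈ 𝒜 := hI.he.1
  have heB : e ∈ ℬ := hI.he.2
  set w := e * z with hw
  have hwA : w ∈ 𝒜 := mul_mem heA hzA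
  have hwHp : z ∈ 𝒜 ⊓ ℋ → w ∈ ℋ := fun h => mul_mem heH h.2
  by_cases hwB : w ∈ ℬ
  · -- C1 : absorb into e
    have hzC : z ∈ 𝒜 ⊓ ℬ := by
      refine Subgroup.mem_inf.mpr ⟨hzA, ?_⟩
      have hzeq : z = e⁻¹ * w := by rw [hw]; group
      rw [hzeq]; exact mul_mem (inv_mem heB) hwB
    refine ⟨φ, w, ⟨Subgroup.mem_inf.mpr ⟨hwA, hwB⟩, hI.hlts, hI.hch, hI.hK, ?_⟩, by rw [hw, ← mul_assoc]⟩
    intro x d hdec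
    exact sideOK_congr (by rw [hw, ← mul_assoc]) (sideOK_mulC_right hC (hI.hlast x d hdec) hzC)
  · rcases snoc_cases φ with hnil | ⟨ψ, a, rfl⟩
    · subst hnil
      refine ⟨[w], 1, ⟨(𝒜 ⊓ ℬ).one_mem, ?_, List.isChain_singleton _, ?_, ?_⟩, by simp [hw, mul_assoc]⟩
      · intro x hx
        simp at hx; subst hx
        exact ltr_iff.mpr (Or.inl ⟨hwA, hwB⟩)
      · intro x d y z₀ hdec
        exfalso
        have hlen := congrArg List.length hdec
        simp only [List.length_append, List.length_cons, List.length_nil] at hlen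
        omega
      · intro x d hdec
        rcases x with _ | ⟨p, x⟩
        · simp at hdec
          subst hdec
          rcases hz with hzp | ⟨hzG, htot⟩
          · exact sideOK_of_memH (hwHp hzp)
          · refine sideOK_of_G₀ ?_
            have he' : e ∈ G₀ := by simpa using htot
            have : ([w] : List 𝒢).prod * 1 = e * z := by simp [hw]
            rw [this]
            exact mul_mem he' hzG.2
        · exfalso
          have hlen := congrArg List.length hdec
          simp only [List.length_append, List.length_cons, List.length_nil] at hlen
          omega
    · -- φ = ψ ++ [a]
      have hla : Ltr 𝒜 ℬ a := hI.hlts a (by simp)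
      have hSlast : SideOK 𝒜 ℬ ℋ G₀ ((ψ ++ [a]).prod * e) a := hI.hlast ψ a rfl
      rcases ltr_iff.mp hla with ⟨haA, haB⟩ | ⟨haB, haA⟩
      · -- same factor: merge or pop
        set u := a * w with hu
        have huA : u ∈ 𝒜 := mul_mem haA hwA
        by_cases huB : u ∈ ℬ
        · -- pop
          have huC : u ∈ 𝒜 ⊓ ℬ := Subgroup.mem_inf.mpr ⟨huA, huB⟩
          rcases snoc_cases ψ with hnil | ⟨ψ', d, rfl⟩
          · subst hnil
            refine ⟨[], u, ⟨huC, by simp, List.isChain_nil, ?_, ?_⟩, by simp [hu, hw, mul_assoc]⟩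
            · intro x d y z₀ hdec
              exfalso
              have hlen := congrArg List.length hdec
              simp only [List.length_append, List.length_cons, List.length_nil] at hlen
              omega
            · intro x d hdec
              exfalso
              have hlen := congrArg List.length hdec
              simp only [List.length_append, List.length_cons, List.length_nil] at hlen
              omega
          · -- ψ = ψ' ++ [d]
            have hld : Ltr 𝒜 ℬ d := hI.hlts d (by simp)
            have hrel_da : Rel 𝒜 ℬ d a := rel_junction' hI.hch
            have hdB : d ∈ ℬ ∧ d ∉ 𝒜 := (factor_of_rel_right hrel_da hld).1 haA
            have hduB : d * u ∈ ℬ := mul_mem hdB.1 huB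
            have hduA : d * u ∉ 𝒜 := fun hcon =>
              hdB.2 (by simpa using mul_mem hcon (inv_mem huA))
            refine ⟨ψ' ++ [d * u], 1, ⟨(𝒜 ⊓ ℬ).one_mem, ?_, ?_, ?_, ?_⟩, ?_⟩
            · intro x hx
              rcases List.mem_append.mp hx with h | h
              · exact hI.hlts x (by simp [h])
              · simp at h; subst h
                exact ltr_iff.mpr (Or.inr ⟨hduB, hduA⟩)
            · refine chain_modLast (chain_of_snoc hI.hch) ?_ (Or.inr ⟨hdB.1, hduB, hduA⟩)
              intro x hx
              exact hI.hlts x (List.mem_append_left [a] hx)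
            · intro x d₀ y₀ z₀ hdec
              rcases snoc_cases z₀ with rfl | ⟨z₁, l, rfl⟩
              · have hdec' : ψ' ++ [d * u] = (x ++ [d₀]) ++ [y₀] := by simpa using hdec
                obtain ⟨e1, e2⟩ := snoc_inj hdec'
                subst e2
                obtain ⟨S1, S2⟩ := hI.hK x d₀ d [a] (by rw [e1]; simp)
                exact ⟨S1, sideOK_letter_mulC hC S2 huC⟩
              · have hdec' : ψ' ++ [d * u] = (x ++ d₀ :: y₀ :: z₁) ++ [l] := by
                  simpa using hdec
                obtain ⟨e1, e2⟩ := snoc_inj hdec'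
                exact hI.hK x d₀ y₀ (z₁ ++ [d] ++ [a]) (by rw [e1]; simp)
            · intro x d₀ hdec
              obtain ⟨rfl, rfl⟩ := snoc_inj hdec.symm
              obtain ⟨S1, S2⟩ := hI.hK x d a [] (by simp)
              refine sideOK_congr ?_ (sideOK_letter_mulC hC (sideOK_mulC_right hC S1 huC) huC)
              simp [mul_assoc]
            · simp [hu, hw, mul_assoc]
        · -- merge
          have hluB : u ∉ ℬ := huB
          refine ⟨ψ ++ [u], 1, ⟨(𝒜 ⊓ ℬ).one_mem, ?_, ?_, ?_, ?_⟩, ?_⟩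
          · intro x hx
            rcases List.mem_append.mp hx with h | h
            · exact hI.hlts x (by simp [h])
            · simp at h; subst h
              exact ltr_iff.mpr (Or.inl ⟨huA, hluB⟩)
          · exact chain_modLast hI.hch (hI.hlts) (Or.inl ⟨haA, huA, hluB⟩)
          · intro x d₀ y₀ z₀ hdec
            rcases snoc_cases z₀ with rfl | ⟨z₁, l, rfl⟩
            · have hdec' : ψ ++ [u] = (x ++ [d₀]) ++ [y₀] := by simpa using hdec
              obtain ⟨e1, e2⟩ := snoc_inj hdec'
              subst e2
              obtain ⟨S1, S2⟩ := hI.hK x d₀ a [] (by rw [e1]; simp)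
              refine ⟨S1, ?_⟩
              -- SideOK (x.prod * d₀) u
              intro F hF huF
              rcases hF with rfl | rfl
              · rcases hz with hzp | ⟨hzG, htot⟩
                · rcases S2 F (Or.inl rfl) haA with hp | hr
                  · exact Or.inl ⟨huF, by
                      rw [hu, hw, ← mul_assoc]
                      exact mul_mem (mul_mem hp.2 heH) hzp.2⟩
                  · exact Or.inr hr
                · rcases S2 F (Or.inl rfl) haA with hp | hr
                  · refine Or.inr ⟨(ψ ++ [a]).prod * e, htot, (a * e)⁻¹,
                      inv_mem (Subgroup.mem_inf.mpr ⟨mul_mem haA heA, mul_mem hp.2 heH⟩), ?_⟩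
                    rw [e1]
                    simp [mul_assoc]
                  · exact Or.inr hr
              · exact absurd huF hluB
            · have hdec' : ψ ++ [u] = (x ++ d₀ :: y₀ :: z₁) ++ [l] := by simpa using hdec
              obtain ⟨e1, e2⟩ := snoc_inj hdec'
              exact hI.hK x d₀ y₀ (z₁ ++ [a]) (by rw [e1]; simp)
          · intro x d₀ hdec
            obtain ⟨rfl, rfl⟩ := snoc_inj hdec.symm
            have heq : (x ++ [u]).prod * 1 = (x ++ [a]).prod * e * z := by
              simp [hu, hw, mul_assoc]
            rcases hz with hzp | ⟨hzG, htot⟩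
            · intro F hF huF
              rcases hF with rfl | rfl
              · rcases hSlast F (Or.inl rfl) haA with hp | ⟨g, hg, y, hy, hgy⟩
                · exact Or.inl ⟨huF, by
                    rw [hu, hw, ← mul_assoc]
                    exact mul_mem (mul_mem hp.2 heH) hzp.2⟩
                · refine Or.inr ⟨g, hg, y * z, mul_mem hy hzp, ?_⟩
                  rw [heq, hgy, mul_assoc]
              · exact absurd huF hluB
            · refine sideOK_of_G₀ ?_
              rw [heq]
              exact mul_mem htot hzG.2
          · simp [hu, hw, mul_assoc]
      · -- different factor: append
        have hrel_aw : Rel 𝒜 ℬ a w := rel_of_diff_factor (Or.inr ⟨haB, hwB, hwA, haA⟩)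
        refine ⟨(ψ ++ [a]) ++ [w], 1, ⟨(𝒜 ⊓ ℬ).one_mem, ?_, ?_, ?_, ?_⟩, ?_⟩
        · intro x hx
          rcases List.mem_append.mp hx with h | h
          · exact hI.hlts x h
          · simp at h; subst h
            exact ltr_iff.mpr (Or.inl ⟨hwA, hwB⟩)
        · refine chain_snoc_build hI.hch ?_
          intro y d hyd
          obtain ⟨e1, e2⟩ := snoc_inj hyd.symm
          subst e2
          exact hrel_aw
        · intro x d₀ y₀ z₀ hdec
          rcases snoc_cases z₀ with rfl | ⟨z₁, l, rfl⟩
          · have hdec' : (ψ ++ [a]) ++ [w] = (x ++ [d₀]) ++ [y₀] := by simpa using hdec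
            obtain ⟨e1, e2⟩ := snoc_inj hdec'
            obtain ⟨e3, e4⟩ := snoc_inj e1
            subst e2; subst e3; subst e4
            constructor
            · refine sideOK_congr ?_ (sideOK_mulC_right hC hSlast (inv_mem hI.he))
              rw [prod_snoc]
              simp [mul_assoc]
            · intro F hF hwF
              rcases hF with rfl | rfl
              · rcases hz with hzp | ⟨hzG, htot⟩
                · exact Or.inl ⟨hwF, hwHp hzp⟩
                · refine Or.inr ⟨(ψ ++ [a]).prod * e, htot, e⁻¹,
                    inv_mem (Subgroup.mem_inf.mpr ⟨heA, heH⟩), ?_⟩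
                  rw [prod_snoc]
                  simp [mul_assoc]
              · exact absurd hwF hwB
          · have hdec' : (ψ ++ [a]) ++ [w] = (x ++ d₀ :: y₀ :: z₁) ++ [l] := by simpa using hdec
            obtain ⟨e1, e2⟩ := snoc_inj hdec'
            exact hI.hK x d₀ y₀ z₁ e1
        · intro x d₀ hdec
          obtain ⟨rfl, rfl⟩ := snoc_inj hdec.symm
          have heq : ((ψ ++ [a]) ++ [w]).prod * 1 = (ψ ++ [a]).prod * e * z := by
            simp [hw, mul_assoc]
          rcases hz with hzp | ⟨hzG, htot⟩
          · exact sideOK_of_memH (hwHp hzp)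
          · refine sideOK_of_G₀ ?_
            rw [heq]
            exact mul_mem htot hzG.2
        · simp [hw, mul_assoc]

theorem step (hC : 𝒜 ⊓ ℬ ≤ ℋ) {φ : List 𝒢} {e z : 𝒢}
    (hI : Inv 𝒜 ℬ ℋ G₀ φ e)
    (hz : (z ∈ 𝒜 ⊓ ℋ ∨ z ∈ ℬ ⊓ ℋ) ∨ ((z ∈ 𝒜 ⊓ G₀ ∨ z ∈ ℬ ⊓ G₀) ∧ φ.prod * e ∈ G₀)) :
    ∃ φ' e', Inv 𝒜 ℬ ℋ G₀ φ' e' ∧ φ'.prod * e' = φ.prod * e * z := by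
  have hCs : ℬ ⊓ 𝒜 ≤ ℋ := fun c hc => hC (core_symm hc)
  rcases hz with (h | h) | ⟨(h | h), htot⟩
  · exact step_left hC hI (Or.inl h)
  · obtain ⟨φ', e', hI', hp⟩ := step_left hCs (inv_swap hI) (Or.inl h)
    exact ⟨φ', e', inv_swap hI', hp⟩
  · exact step_left hC hI (Or.inr ⟨h, htot⟩)
  · obtain ⟨φ', e', hI', hp⟩ := step_left hCs (inv_swap hI) (Or.inr ⟨h, htot⟩)
    exact ⟨φ', e', inv_swap hI', hp⟩

end Step


section Folds
variable {𝒜 ℬ ℋ G₀ : Subgroup 𝒢}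

lemma exists_letters_of_mem_closure {S : Set 𝒢} (hSinv : ∀ y ∈ S, y⁻¹ ∈ S) {x : 𝒢}
    (hx : x ∈ Subgroup.closure S) : ∃ l : List 𝒢, (∀ y ∈ l, y ∈ S) ∧ l.prod = x := by
  have h1 : x ∈ (Subgroup.closure S).toSubmonoid := hx
  rw [Subgroup.closure_toSubmonoid] at h1
  obtain ⟨l, hl, hp⟩ := Submonoid.exists_list_of_mem_closure h1
  refine ⟨l, ?_, hp⟩
  intro y hy
  rcases hl y hy with h | h
  · exact h
  · rw [Set.mem_inv] at h
    simpa using hSinv _ h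

lemma fold_H (hC : 𝒜 ⊓ ℬ ≤ ℋ) (l : List 𝒢)
    (hl : ∀ y ∈ l, y ∈ 𝒜 ⊓ ℋ ∨ y ∈ ℬ ⊓ ℋ) :
    ∀ (φ : List 𝒢) (e : 𝒢), Inv 𝒜 ℬ ℋ G₀ φ e →
      ∃ φ' e', Inv 𝒜 ℬ ℋ G₀ φ' e' ∧ φ'.prod * e' = φ.prod * e * l.prod := by
  induction l with
  | nil => intro φ e hI; exact ⟨φ, e, hI, by simp⟩
  | cons y l IH =>
    intro φ e hI
    obtain ⟨φ₁, e₁, hI₁, hp₁⟩ := step hC hI (Or.inl (hl y (by simp)))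
    obtain ⟨φ₂, e₂, hI₂, hp₂⟩ := IH (fun y hy => hl y (by simp [hy])) φ₁ e₁ hI₁
    refine ⟨φ₂, e₂, hI₂, ?_⟩
    rw [hp₂, hp₁]
    simp [mul_assoc]

lemma step_H (hC : 𝒜 ⊓ ℬ ≤ ℋ) (hcomp₂ : ℋ = (𝒜 ⊓ ℋ) ⊔ (ℬ ⊓ ℋ)) {φ : List 𝒢} {e η : 𝒢}
    (hI : Inv 𝒜 ℬ ℋ G₀ φ e) (hη : η ∈ ℋ) :
    ∃ φ' e', Inv 𝒜 ℬ ℋ G₀ φ' e' ∧ φ'.prod * e' = φ.prod * e * η := by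
  have h1 : η ∈ Subgroup.closure (((𝒜 ⊓ ℋ : Subgroup 𝒢) : Set 𝒢) ∪ ((ℬ ⊓ ℋ : Subgroup 𝒢) : Set 𝒢)) := by
    rw [Subgroup.closure_union, Subgroup.closure_eq, Subgroup.closure_eq, ← hcomp₂]
    exact hη
  obtain ⟨l, hl, rfl⟩ := exists_letters_of_mem_closure (fun y hy => by
    rcases hy with h | h
    · exact Or.inl (inv_mem h)
    · exact Or.inr (inv_mem h)) h1
  exact fold_H hC l (fun y hy => by
    rcases hl y hy with h | h
    · exact Or.inl h
    · exact Or.inr h) φ e hI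

lemma fold_main (hC : 𝒜 ⊓ ℬ ≤ ℋ) (hcomp₂ : ℋ = (𝒜 ⊓ ℋ) ⊔ (ℬ ⊓ ℋ)) (l : List 𝒢)
    (hl : ∀ y ∈ l, y ∈ ℋ ⊓ G₀ ∨ y ∈ 𝒜 ⊓ G₀ ∨ y ∈ ℬ ⊓ G₀) :
    ∀ (φ : List 𝒢) (e : 𝒢), Inv 𝒜 ℬ ℋ G₀ φ e → φ.prod * e ∈ G₀ →
      ∃ φ' e', Inv 𝒜 ℬ ℋ G₀ φ' e' ∧ φ'.prod * e' = φ.prod * e * l.prod := by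
  induction l with
  | nil => intro φ e hI _; exact ⟨φ, e, hI, by simp⟩
  | cons y l IH =>
    intro φ e hI htot
    have hyG : y ∈ G₀ := by
      rcases hl y (by simp) with h | h | h
      exacts [h.2, h.2, h.2]
    have hstep : ∃ φ₁ e₁, Inv 𝒜 ℬ ℋ G₀ φ₁ e₁ ∧ φ₁.prod * e₁ = φ.prod * e * y := by
      rcases hl y (by simp) with h | h | h
      · exact step_H hC hcomp₂ hI h.1
      · exact step hC hI (Or.inr ⟨Or.inl h, htot⟩)
      · exact step hC hI (Or.inr ⟨Or.inr h, htot⟩)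
    obtain ⟨φ₁, e₁, hI₁, hp₁⟩ := hstep
    obtain ⟨φ₂, e₂, hI₂, hp₂⟩ := IH (fun y hy => hl y (by simp [hy])) φ₁ e₁ hI₁
      (by rw [hp₁]; exact mul_mem htot hyG)
    refine ⟨φ₂, e₂, hI₂, ?_⟩
    rw [hp₂, hp₁]
    simp [mul_assoc]

lemma inv_nil : Inv 𝒜 ℬ ℋ G₀ ([] : List 𝒢) 1 := by
  refine ⟨(𝒜 ⊓ ℬ).one_mem, by simp, List.isChain_nil, ?_, ?_⟩
  · intro x d y z hdec
    exfalso
    have hlen := congrArg List.length hdec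
    simp only [List.length_append, List.length_cons, List.length_nil] at hlen
    omega
  · intro x d hdec
    exfalso
    have hlen := congrArg List.length hdec
    simp only [List.length_append, List.length_cons, List.length_nil] at hlen
    omega

lemma exists_inv (hC : 𝒜 ⊓ ℬ ≤ ℋ) (hcomp₂ : ℋ = (𝒜 ⊓ ℋ) ⊔ (ℬ ⊓ ℋ)) {h : 𝒢}
    (hh : h ∈ (ℋ ⊓ G₀) ⊔ ((𝒜 ⊓ G₀) ⊔ (ℬ ⊓ G₀))) :
    ∃ φ e, Inv 𝒜 ℬ ℋ G₀ φ e ∧ φ.prod * e = h := by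
  have h1 : h ∈ Subgroup.closure (((ℋ ⊓ G₀ : Subgroup 𝒢) : Set 𝒢) ∪
      (((𝒜 ⊓ G₀ : Subgroup 𝒢) : Set 𝒢) ∪ ((ℬ ⊓ G₀ : Subgroup 𝒢) : Set 𝒢))) := by
    rw [Subgroup.closure_union, Subgroup.closure_union,
      Subgroup.closure_eq, Subgroup.closure_eq, Subgroup.closure_eq]
    exact hh
  obtain ⟨l, hl, rfl⟩ := exists_letters_of_mem_closure (fun y hy => by
    rcases hy with h | h | h
    · exact Or.inl (inv_mem h)
    · exact Or.inr (Or.inl (inv_mem h))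
    · exact Or.inr (Or.inr (inv_mem h))) h1
  obtain ⟨φ, e, hI, hp⟩ := fold_main hC hcomp₂ l (fun y hy => by
    rcases hl y hy with h | h | h
    · exact Or.inl h
    · exact Or.inr (Or.inl h)
    · exact Or.inr (Or.inr h)) [] 1 inv_nil (by simpa using G₀.one_mem)
  exact ⟨φ, e, hI, by simpa using hp⟩

lemma ltr_mulC {a e : 𝒢} (ha : Ltr 𝒜 ℬ a) (he : e ∈ 𝒜 ⊓ ℬ) : Ltr 𝒜 ℬ (a * e) := by
  rw [ltr_iff] at ha ⊢
  rcases ha with ⟨h1, h2⟩ | ⟨h1, h2⟩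
  · exact Or.inl ⟨mul_mem h1 he.1, fun hcon => h2 (by simpa using mul_mem hcon (inv_mem he.2))⟩
  · exact Or.inr ⟨mul_mem h1 he.2, fun hcon => h2 (by simpa using mul_mem hcon (inv_mem he.1))⟩

/-- fold the pending `e` into the last letter -/
lemma absorb (hC : 𝒜 ⊓ ℬ ≤ ℋ) {ψ : List 𝒢} {a e : 𝒢} (hI : Inv 𝒜 ℬ ℋ G₀ (ψ ++ [a]) e) :
    Inv 𝒜 ℬ ℋ G₀ (ψ ++ [a * e]) 1 ∧ (ψ ++ [a * e]).prod * 1 = (ψ ++ [a]).prod * e := by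
  have hla : Ltr 𝒜 ℬ a := hI.hlts a (by simp)
  have hlae : Ltr 𝒜 ℬ (a * e) := ltr_mulC hla hI.he
  constructor
  · refine ⟨(𝒜 ⊓ ℬ).one_mem, ?_, ?_, ?_, ?_⟩
    · intro x hx
      rcases List.mem_append.mp hx with h | h
      · exact hI.hlts x (by simp [h])
      · simp at h; subst h; exact hlae
    · refine chain_modLast hI.hch hI.hlts ?_
      rcases ltr_iff.mp hla with ⟨h1, h2⟩ | ⟨h1, h2⟩
      · refine Or.inl ⟨h1, mul_mem h1 hI.he.1, ?_⟩
        intro hcon; exact h2 (by simpa using mul_mem hcon (inv_mem hI.he.2))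
      · refine Or.inr ⟨h1, mul_mem h1 hI.he.2, ?_⟩
        intro hcon; exact h2 (by simpa using mul_mem hcon (inv_mem hI.he.1))
    · intro x d₀ y₀ z₀ hdec
      rcases snoc_cases z₀ with rfl | ⟨z₁, l, rfl⟩
      · have hdec' : ψ ++ [a * e] = (x ++ [d₀]) ++ [y₀] := by simpa using hdec
        obtain ⟨e1, e2⟩ := snoc_inj hdec'
        subst e2
        obtain ⟨S1, S2⟩ := hI.hK x d₀ a [] (by rw [e1]; simp)
        exact ⟨S1, sideOK_letter_mulC hC S2 hI.he⟩
      · have hdec' : ψ ++ [a * e] = (x ++ d₀ :: y₀ :: z₁) ++ [l] := by simpa using hdec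
        obtain ⟨e1, e2⟩ := snoc_inj hdec'
        exact hI.hK x d₀ y₀ (z₁ ++ [a]) (by rw [e1]; simp)
    · intro x d₀ hdec
      obtain ⟨rfl, rfl⟩ := snoc_inj hdec.symm
      refine sideOK_congr ?_ (sideOK_letter_mulC hC (hI.hlast x a rfl) hI.he)
      simp [mul_assoc]
  · simp [mul_assoc]

end Folds


section Final
variable {𝒜 ℬ ℋ G₀ : Subgroup 𝒢}

lemma decomp_at (l : List 𝒢) (j : ℕ) (hj : j + 1 < l.length) :
    l = l.take j ++ l[j] :: l[j + 1] :: l.drop (j + 2) := by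
  conv_lhs => rw [← List.take_append_drop j l]
  rw [List.drop_eq_getElem_cons (by omega), List.drop_eq_getElem_cons (by omega)]

lemma inv_junction {φ : List 𝒢} {e : 𝒢} (hI : Inv 𝒜 ℬ ℋ G₀ φ e) {j : ℕ}
    (hj : j + 1 < φ.length) :
    SideOK 𝒜 ℬ ℋ G₀ ((φ.take (j + 1)).prod) (φ[j]'(by omega)) ∧
      SideOK 𝒜 ℬ ℋ G₀ ((φ.take (j + 1)).prod) (φ[j + 1]'hj) := by
  obtain ⟨S1, S2⟩ := hI.hK (φ.take j) (φ[j]'(by omega)) (φ[j+1]'hj) (φ.drop (j+2))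
    (decomp_at φ j hj)
  have heq : (φ.take j).prod * (φ[j]'(by omega)) = (φ.take (j+1)).prod :=
    (List.prod_take_succ φ j (by omega)).symm
  exact ⟨sideOK_congr heq S1, sideOK_congr heq S2⟩

lemma coreYB (hC : 𝒜 ⊓ ℬ ≤ ℋ) {c : 𝒢} (hc : c ∈ 𝒜 ⊓ ℬ) : c ∈ ℬ ⊓ ℋ :=
  Subgroup.mem_inf.mpr ⟨hc.2, hC hc⟩

end Final

end EK


/-- **Edo–Kuroda, Corollary 3.9.**  In the amalgamated-product setting, let
`h ∈ ⟨H,T⟩` have reduced `(𝒜,ℬ)`-decomposition `(θ₁,…,θ_m)` and let `θ_i ∈ ℬ`.  Then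
`θ₁ ∈ B·(ℬ∩ℋ)` if `i = 1`, `θ_m ∈ (ℬ∩ℋ)·B` if `i = m`, and
`θ_i ∈ (ℬ∩ℋ)·B·(ℬ∩ℋ)` if `1 < i < m`. -/
theorem reduced_decomposition_letters_mem {𝒢 : Type*} [Group 𝒢] (𝒜 ℬ ℋ G₀ : Subgroup 𝒢)
    (hgen : 𝒜 ⊔ ℬ = ⊤)
    (hamal : IsAmalgamated (𝒜 : Set 𝒢) (ℬ : Set 𝒢))
    (hcomp₁ : 𝒜 ⊓ ℬ ≤ ℋ)
    (hcomp₂ : ℋ = (𝒜 ⊓ ℋ) ⊔ (ℬ ⊓ ℋ))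
    (h : 𝒢) (hh : h ∈ (ℋ ⊓ G₀) ⊔ ((𝒜 ⊓ G₀) ⊔ (ℬ ⊓ G₀)))
    (θ : List 𝒢) (hθ : IsReducedDecomp (𝒜 : Set 𝒢) (ℬ : Set 𝒢) h θ)
    (i : Fin θ.length) (hi : θ.get i ∈ ℬ) :
    (i.val = 0 →
      θ.get i ∈ ((ℬ ⊓ G₀ : Subgroup 𝒢) : Set 𝒢) * ((ℬ ⊓ ℋ : Subgroup 𝒢) : Set 𝒢)) ∧
    (i.val = θ.length - 1 →
      θ.get i ∈ ((ℬ ⊓ ℋ : Subgroup 𝒢) : Set 𝒢) * ((ℬ ⊓ G₀ : Subgroup 𝒢) : Set 𝒢)) ∧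
    (0 < i.val → i.val < θ.length - 1 →
      θ.get i ∈ ((ℬ ⊓ ℋ : Subgroup 𝒢) : Set 𝒢) * ((ℬ ⊓ G₀ : Subgroup 𝒢) : Set 𝒢) *
        ((ℬ ⊓ ℋ : Subgroup 𝒢) : Set 𝒢)) := by
  classical
  obtain ⟨hredθ, hprodθ⟩ := hθ
  have hG : h ∈ G₀ :=
    (sup_le inf_le_right (sup_le inf_le_right inf_le_right) : _ ≤ G₀) hh
  obtain ⟨φ₀, e, hI₀, hp₀⟩ := EK.exists_inv hcomp₁ hcomp₂ hh
  rcases EK.snoc_cases φ₀ with rfl | ⟨ψ, a, rfl⟩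
  · exfalso
    have hhC : h ∈ 𝒜 ⊓ ℬ := by
      have he : e = h := by simpa using hp₀
      exact he ▸ hI₀.he
    exact EK.prod_notin_core hamal hredθ (by rw [hprodθ]; exact hhC)
  obtain ⟨hI, hp⟩ := EK.absorb hcomp₁ hI₀
  have hφprod : (ψ ++ [a * e]).prod = h := by
    have h2 := hp.trans hp₀
    simpa using h2
  set φ := ψ ++ [a * e] with hφdef
  have hredφ : IsReducedWord (𝒜 : Set 𝒢) (ℬ : Set 𝒢) φ := ⟨by simp [hφdef], hI.hlts, hI.hch⟩
  obtain ⟨hlen, hpre⟩ := EK.unique_aux hamal θ.length θ φ rfl hredφ hredθ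
    (by rw [hφprod, hprodθ])
  rcases i with ⟨j, hj⟩
  have hjφ : j < φ.length := by omega
  obtain ⟨c1, hc1def, hc1⟩ : ∃ c, ((φ.take j).prod)⁻¹ * (θ.take j).prod = c ∧ c ∈ 𝒜 ⊓ ℬ :=
    ⟨_, rfl, hpre j⟩
  obtain ⟨c2, hc2def, hc2⟩ : ∃ c, ((φ.take (j+1)).prod)⁻¹ * (θ.take (j+1)).prod = c ∧
      c ∈ 𝒜 ⊓ ℬ := ⟨_, rfl, hpre (j+1)⟩
  have hθs : (θ.take (j+1)).prod = (θ.take j).prod * θ[j] := List.prod_take_succ θ j hj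
  have hφs : (φ.take (j+1)).prod = (φ.take j).prod * (φ[j]'hjφ) := List.prod_take_succ φ j hjφ
  have hget : θ.get ⟨j, hj⟩ = θ[j] := List.get_eq_getElem (l := θ) (i := ⟨j, hj⟩)
  rw [hget] at hi
  have hletter : θ[j] = c1⁻¹ * (φ[j]'hjφ) * c2 := by
    have h1 : θ[j] = ((θ.take j).prod)⁻¹ * (θ.take (j+1)).prod := by rw [hθs]; group
    rw [← hc1def, ← hc2def, hφs, h1]; group
  have hφmem : φ[j]'hjφ ∈ ℬ := by
    have hid : φ[j]'hjφ = c1 * θ[j] * c2⁻¹ := by rw [hletter]; group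
    rw [hid]; exact mul_mem (mul_mem hc1.2 hi) (inv_mem hc2.2)
  have hc1YB : c1 ∈ ℬ ⊓ ℋ := EK.coreYB hcomp₁ hc1
  have hc2YB : c2 ∈ ℬ ⊓ ℋ := EK.coreYB hcomp₁ hc2
  -- the pure escape: θ[j] ∈ ℬ ⊓ ℋ whenever φ[j] ∈ ℋ
  have hpureYB : φ[j]'hjφ ∈ ℋ → θ[j] ∈ ℬ ⊓ ℋ := by
    intro hH
    rw [hletter]
    exact mul_mem (mul_mem (inv_mem hc1YB) (Subgroup.mem_inf.mpr ⟨hφmem, hH⟩)) hc2YB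
  -- the length-one case
  have hone : θ.length = 1 → θ[j] ∈ ℬ ⊓ G₀ := by
    intro hm
    have hj0 : j = 0 := by omega
    have h1 : (θ.take (j+1)).prod = h := by
      rw [List.take_of_length_le (by omega), hprodθ]
    have h2 : (θ.take j).prod = 1 := by rw [hj0]; simp
    have h3 : θ[j] = h := by
      rw [h1, h2, one_mul] at hθs
      exact hθs.symm
    rw [h3]
    exact Subgroup.mem_inf.mpr ⟨h3 ▸ hi, hG⟩
  refine ⟨?_, ?_, ?_⟩
  · -- first letter
    intro hj0
    simp only at hj0
    subst hj0
    have hc1_1 : c1 = 1 := by rw [← hc1def]; simp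
    by_cases hm : θ.length = 1
    · have hmem := hone hm
      rw [hget, show θ[0] = θ[0] * 1 from (mul_one _).symm]
      exact Set.mul_mem_mul hmem ((ℬ ⊓ ℋ).one_mem)
    · have hjj : 0 + 1 < φ.length := by omega
      obtain ⟨S, -⟩ := EK.inv_junction hI hjj
      rcases S ℬ (Or.inr rfl) hφmem with hpu | ⟨g, hg, y, hy, hgy⟩
      · rw [hget, show θ[0] = (1 : 𝒢) * θ[0] from (one_mul _).symm]
        exact Set.mul_mem_mul ((ℬ ⊓ G₀).one_mem) (hpureYB hpu.2)
      · have hPval : (φ.take (0+1)).prod = φ[0]'hjφ := by rw [hφs]; simp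
        have hgmem : g ∈ ℬ := by
          have hgid : g = (φ[0]'hjφ) * y⁻¹ := by rw [← hPval, hgy]; group
          rw [hgid]; exact mul_mem hφmem (inv_mem hy.1)
        have heq : θ[0] = g * (y * c2) := by
          rw [hletter, hc1_1, show φ[0]'hjφ = g * y from by rw [← hPval, hgy]]
          group
        rw [hget, heq]
        exact Set.mul_mem_mul (Subgroup.mem_inf.mpr ⟨hgmem, hg⟩) (mul_mem hy hc2YB)
  · -- last letter
    intro hjm
    simp only at hjm
    by_cases hm : θ.length = 1
    · have hmem := hone hm
      rw [hget, show θ[j] = (1 : 𝒢) * θ[j] from (one_mul _).symm]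
      exact Set.mul_mem_mul ((ℬ ⊓ ℋ).one_mem) hmem
    · have hc2_1 : c2 = 1 := by
        rw [← hc2def, List.take_of_length_le (l := θ) (by omega),
          List.take_of_length_le (l := φ) (by omega), hφprod, hprodθ, inv_mul_cancel]
      obtain ⟨k, rfl⟩ : ∃ k, j = k + 1 := ⟨j - 1, by omega⟩
      have hkk : k + 1 < φ.length := by omega
      obtain ⟨-, S⟩ := EK.inv_junction hI hkk
      rcases S ℬ (Or.inr rfl) hφmem with hpu | ⟨g, hg, y, hy, hgy⟩
      · rw [hget, show θ[k+1] = θ[k+1] * 1 from (mul_one _).symm]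
        exact Set.mul_mem_mul (hpureYB hpu.2) ((ℬ ⊓ G₀).one_mem)
      · have hfull : (φ.take (k+2)).prod = h := by
          rw [List.take_of_length_le (by omega), hφprod]
        have hsucc : (φ.take (k+2)).prod = (φ.take (k+1)).prod * (φ[k+1]'hjφ) :=
          List.prod_take_succ φ (k+1) hjφ
        have hφid : φ[k+1]'hjφ = y⁻¹ * (g⁻¹ * h) := by
          have h4 : (g * y) * (φ[k+1]'hjφ) = (g * y) * (y⁻¹ * (g⁻¹ * h)) := by
            rw [show (g * y) * (y⁻¹ * (g⁻¹ * h)) = h from by group, ← hgy, ← hsucc, hfull]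
          exact mul_left_cancel h4
        have hdG : g⁻¹ * h ∈ G₀ := mul_mem (inv_mem hg) hG
        have hdB : g⁻¹ * h ∈ ℬ := by
          have hdid : g⁻¹ * h = y * (φ[k+1]'hjφ) := by rw [hφid]; group
          rw [hdid]; exact mul_mem hy.1 hφmem
        have heq : θ[k+1] = (c1⁻¹ * y⁻¹) * (g⁻¹ * h) := by
          rw [hletter, hc2_1, hφid]; group
        rw [hget, heq]
        exact Set.mul_mem_mul (mul_mem (inv_mem hc1YB) (inv_mem hy))
          (Subgroup.mem_inf.mpr ⟨hdB, hdG⟩)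
  · -- middle letter
    intro hj1 hj2
    simp only at hj1 hj2
    obtain ⟨k, rfl⟩ : ∃ k, j = k + 1 := ⟨j - 1, by omega⟩
    have hkk : k + 1 < φ.length := by omega
    have hkk2 : (k + 1) + 1 < φ.length := by omega
    obtain ⟨-, SA⟩ := EK.inv_junction hI hkk
    obtain ⟨SB, -⟩ := EK.inv_junction hI hkk2
    have hpure3 : θ[k+1] ∈ ℬ ⊓ ℋ →
        θ.get ⟨k+1, hj⟩ ∈ ((ℬ ⊓ ℋ : Subgroup 𝒢) : Set 𝒢) * ((ℬ ⊓ G₀ : Subgroup 𝒢) : Set 𝒢) *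
          ((ℬ ⊓ ℋ : Subgroup 𝒢) : Set 𝒢) := by
      intro hmem
      rw [hget, show θ[k+1] = θ[k+1] * 1 * 1 from by group]
      exact Set.mul_mem_mul (Set.mul_mem_mul hmem ((ℬ ⊓ G₀).one_mem)) ((ℬ ⊓ ℋ).one_mem)
    rcases SA ℬ (Or.inr rfl) hφmem with hpu | ⟨g, hg, y, hy, hgy⟩
    · exact hpure3 (hpureYB hpu.2)
    · rcases SB ℬ (Or.inr rfl) hφmem with hpu | ⟨g', hg', y', hy', hgy'⟩
      · exact hpure3 (hpureYB hpu.2)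
      · have hsucc : (φ.take (k+2)).prod = (φ.take (k+1)).prod * (φ[k+1]'hjφ) :=
          List.prod_take_succ φ (k+1) hjφ
        have hφid : φ[k+1]'hjφ = y⁻¹ * (g⁻¹ * g') * y' := by
          have h4 : (g * y) * (φ[k+1]'hjφ) = (g * y) * (y⁻¹ * (g⁻¹ * g') * y') := by
            rw [show (g * y) * (y⁻¹ * (g⁻¹ * g') * y') = g' * y' from by group,
              ← hgy, ← hsucc, hgy']
          exact mul_left_cancel h4
        have hmidB : g⁻¹ * g' ∈ ℬ := by
          have hmid : g⁻¹ * g' = y * (φ[k+1]'hjφ) * y'⁻¹ := by rw [hφid]; group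
          rw [hmid]; exact mul_mem (mul_mem hy.1 hφmem) (inv_mem hy'.1)
        have hmidG : g⁻¹ * g' ∈ G₀ := mul_mem (inv_mem hg) hg'
        have heq : θ[k+1] = ((c1⁻¹ * y⁻¹) * (g⁻¹ * g')) * (y' * c2) := by
          rw [hletter, hφid]; group
        rw [hget, heq]
        exact Set.mul_mem_mul (Set.mul_mem_mul
          (mul_mem (inv_mem hc1YB) (inv_mem hy)) (Subgroup.mem_inf.mpr ⟨hmidB, hmidG⟩))
          (mul_mem hy' hc2YB)
end

section
/- In the amalgamated-product setting (𝒢 = 𝒜 *_∩ ℬ, ℋ an (𝒜,ℬ)-compatible subgroup, G a subgroup of 𝒢, A = 𝒜∩G, B = ℬ∩G, H = ℋ∩G, T = ⟨A,B⟩), assume in addition A ⊆ ℋ. Let h ∈ G be such that h = β₁αβ₂ for some β₁, β₂ ∈ ℬ∖𝒜 and α ∈ 𝒜∖ℬ (so h has a reduced (𝒜,ℬ)-decomposition of length 3 of the form ℬ𝒜ℬ). Then h ∈ ⟨H,T⟩ if and only if h ∈ B·ℋ·B. -/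
open Pointwise

namespace EK2

open scoped Classical

variable {𝒢 : Type*} [Group 𝒢] (𝒜 ℬ : Subgroup 𝒢)

section AltPhi

/-- Alternating word over a pair of subgroups. -/
def Alt (U V : Subgroup 𝒢) (z : List 𝒢) : Prop :=
  z ≠ [] ∧ (∀ x ∈ z, (x ∈ U ∧ x ∉ V) ∨ (x ∈ V ∧ x ∉ U)) ∧
    z.Chain' fun a b => ¬(a ∈ U ∧ b ∈ U) ∧ ¬(a ∈ V ∧ b ∈ V)

/-- Normal-form statement for elements of `U ⊔ V`. -/
def Phi (U V : Subgroup 𝒢) (g : 𝒢) : Prop :=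
  g ∈ U ∨ g ∈ V ∨ ∃ z, Alt U V z ∧ z.prod = g

variable {U V : Subgroup 𝒢}

lemma alt_init {z₀ : List 𝒢} {x : 𝒢} (h : Alt U V (z₀ ++ [x])) (hz₀ : z₀ ≠ []) :
    Alt U V z₀ := by
  refine ⟨hz₀, fun y hy => h.2.1 y (List.mem_append_left _ hy), ?_⟩
  exact (List.isChain_append.1 h.2.2).1

lemma alt_tail {z : List 𝒢} {y : 𝒢} (h : Alt U V (y :: z)) (hz : z ≠ []) :
    Alt U V z := by
  refine ⟨hz, fun x hx => h.2.1 x (List.mem_cons_of_mem _ hx), (List.isChain_cons.1 h.2.2).2⟩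

lemma absorb (z : List 𝒢) :
    Alt U V z → ∀ s, (s ∈ U ∨ s ∈ V) → Phi U V (z.prod * s) := by
  induction z using List.reverseRecOn with
  | nil => exact fun hz => absurd rfl hz.1
  | append_singleton z₀ x IH =>
    intro hz s hs
    have hx : (x ∈ U ∧ x ∉ V) ∨ (x ∈ V ∧ x ∉ U) := hz.2.1 x (by simp)
    rw [List.prod_append, List.prod_singleton, mul_assoc]
    have hbound : ∀ a ∈ z₀.getLast?, ¬(a ∈ U ∧ x ∈ U) ∧ ¬(a ∈ V ∧ x ∈ V) := by
      have := (List.isChain_append.1 hz.2.2).2.2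
      intro a ha; exact this a ha x (by simp)
    rcases hx with ⟨hxU, hxV⟩ | ⟨hxV, hxU⟩
    · by_cases hsU : s ∈ U
      · by_cases hV : x * s ∈ V
        · have hxsU : x * s ∈ U := mul_mem hxU hsU
          rcases eq_or_ne z₀ [] with rfl | hz₀
          · rw [List.prod_nil, one_mul]; exact Or.inl hxsU
          · exact IH (alt_init hz hz₀) (x * s) (Or.inl hxsU)
        · refine Or.inr (Or.inr ⟨z₀ ++ [x * s], ⟨by simp, ?_, ?_⟩,
            by rw [List.prod_append, List.prod_singleton]⟩)
          · intro y hy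
            rcases List.mem_append.1 hy with hy | hy
            · exact hz.2.1 y (List.mem_append_left _ hy)
            · rw [List.mem_singleton] at hy; subst hy
              exact Or.inl ⟨mul_mem hxU hsU, hV⟩
          · rw [List.Chain', List.isChain_append]
            refine ⟨(List.isChain_append.1 hz.2.2).1, by simp, ?_⟩
            intro a ha y hy
            rw [List.head?_cons, Option.mem_some_iff] at hy; subst hy
            exact ⟨fun hc => (hbound a ha).1 ⟨hc.1, hxU⟩, fun hc => hV hc.2⟩
      · have hsV : s ∈ V := hs.resolve_left hsU
        refine Or.inr (Or.inr ⟨(z₀ ++ [x]) ++ [s], ⟨by simp, ?_, ?_⟩, ?_⟩)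
        · intro y hy
          rcases List.mem_append.1 hy with hy | hy
          · exact hz.2.1 y hy
          · rw [List.mem_singleton] at hy; subst hy
            exact Or.inr ⟨hsV, hsU⟩
        · rw [List.Chain', List.isChain_append]
          refine ⟨hz.2.2, by simp, ?_⟩
          intro a ha y hy
          rw [List.head?_cons, Option.mem_some_iff] at hy; subst hy
          rw [List.getLast?_concat, Option.mem_some_iff] at ha; subst ha
          exact ⟨fun hc => hsU hc.2, fun hc => hxV hc.1⟩
        · rw [List.prod_append, List.prod_append, List.prod_singleton,
            List.prod_singleton, mul_assoc]
    · by_cases hsV : s ∈ V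
      · by_cases hU : x * s ∈ U
        · have hxsV : x * s ∈ V := mul_mem hxV hsV
          rcases eq_or_ne z₀ [] with rfl | hz₀
          · rw [List.prod_nil, one_mul]; exact Or.inr (Or.inl hxsV)
          · exact IH (alt_init hz hz₀) (x * s) (Or.inr hxsV)
        · refine Or.inr (Or.inr ⟨z₀ ++ [x * s], ⟨by simp, ?_, ?_⟩,
            by rw [List.prod_append, List.prod_singleton]⟩)
          · intro y hy
            rcases List.mem_append.1 hy with hy | hy
            · exact hz.2.1 y (List.mem_append_left _ hy)
            · rw [List.mem_singleton] at hy; subst hy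
              exact Or.inr ⟨mul_mem hxV hsV, hU⟩
          · rw [List.Chain', List.isChain_append]
            refine ⟨(List.isChain_append.1 hz.2.2).1, by simp, ?_⟩
            intro a ha y hy
            rw [List.head?_cons, Option.mem_some_iff] at hy; subst hy
            exact ⟨fun hc => hU hc.2, fun hc => (hbound a ha).2 ⟨hc.1, hxV⟩⟩
      · have hsU : s ∈ U := hs.resolve_right hsV
        refine Or.inr (Or.inr ⟨(z₀ ++ [x]) ++ [s], ⟨by simp, ?_, ?_⟩, ?_⟩)
        · intro y hy
          rcases List.mem_append.1 hy with hy | hy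
          · exact hz.2.1 y hy
          · rw [List.mem_singleton] at hy; subst hy
            exact Or.inl ⟨hsU, hsV⟩
        · rw [List.Chain', List.isChain_append]
          refine ⟨hz.2.2, by simp, ?_⟩
          intro a ha y hy
          rw [List.head?_cons, Option.mem_some_iff] at hy; subst hy
          rw [List.getLast?_concat, Option.mem_some_iff] at ha; subst ha
          exact ⟨fun hc => hxU hc.1, fun hc => hsV hc.2⟩
        · rw [List.prod_append, List.prod_append, List.prod_singleton,
            List.prod_singleton, mul_assoc]

lemma phi_mul_single {a : 𝒢} (ha : Phi U V a) {s : 𝒢} (hs : s ∈ U ∨ s ∈ V) :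
    Phi U V (a * s) := by
  rcases ha with ha | ha | ⟨z, hz, rfl⟩
  · rcases hs with hsU | hsV
    · exact Or.inl (mul_mem ha hsU)
    · by_cases haV : a ∈ V
      · exact Or.inr (Or.inl (mul_mem haV hsV))
      · by_cases hsU : s ∈ U
        · exact Or.inl (mul_mem ha hsU)
        · refine Or.inr (Or.inr ⟨[a, s], ⟨by simp, ?_, ?_⟩, by simp⟩)
          · intro y hy
            rcases List.mem_pair.1 hy with rfl | rfl
            · exact Or.inl ⟨ha, haV⟩
            · exact Or.inr ⟨hsV, hsU⟩
          · exact List.isChain_pair.2 ⟨fun hc => hsU hc.2, fun hc => haV hc.1⟩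
  · rcases hs with hsU | hsV
    · by_cases haU : a ∈ U
      · exact Or.inl (mul_mem haU hsU)
      · by_cases hsV : s ∈ V
        · exact Or.inr (Or.inl (mul_mem ha hsV))
        · refine Or.inr (Or.inr ⟨[a, s], ⟨by simp, ?_, ?_⟩, by simp⟩)
          · intro y hy
            rcases List.mem_pair.1 hy with rfl | rfl
            · exact Or.inr ⟨ha, haU⟩
            · exact Or.inl ⟨hsU, hsV⟩
          · exact List.isChain_pair.2 ⟨fun hc => haU hc.1, fun hc => hsV hc.2⟩
    · exact Or.inr (Or.inl (mul_mem ha hsV))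
  · exact absorb z hz s hs

lemma phi_mul_alt : ∀ (z : List 𝒢), Alt U V z → ∀ a, Phi U V a → Phi U V (a * z.prod) := by
  intro z
  induction z with
  | nil => exact fun hz => absurd rfl hz.1
  | cons y rest IH =>
    intro hz a ha
    have hy : y ∈ U ∨ y ∈ V := by
      rcases hz.2.1 y (List.mem_cons_self) with h | h
      · exact Or.inl h.1
      · exact Or.inr h.1
    have h1 : Phi U V (a * y) := phi_mul_single ha hy
    rcases eq_or_ne rest [] with rfl | hne
    · simpa using h1
    · rw [List.prod_cons, ← mul_assoc]
      exact IH (alt_tail hz hne) (a * y) h1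

lemma phi_mul {a b : 𝒢} (ha : Phi U V a) (hb : Phi U V b) : Phi U V (a * b) := by
  rcases hb with hb | hb | ⟨z, hz, rfl⟩
  · exact phi_mul_single ha (Or.inl hb)
  · exact phi_mul_single ha (Or.inr hb)
  · exact phi_mul_alt z hz a ha

lemma phi_inv {g : 𝒢} (hg : Phi U V g) : Phi U V g⁻¹ := by
  rcases hg with hg | hg | ⟨z, hz, rfl⟩
  · exact Or.inl (inv_mem hg)
  · exact Or.inr (Or.inl (inv_mem hg))
  · refine Or.inr (Or.inr ⟨(z.map fun x => x⁻¹).reverse, ⟨by simpa using hz.1, ?_, ?_⟩,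
      (List.prod_inv_reverse z).symm⟩)
    · intro y hy
      rw [List.mem_reverse, List.mem_map] at hy
      obtain ⟨x, hx, rfl⟩ := hy
      rcases hz.2.1 x hx with h | h
      · exact Or.inl ⟨inv_mem h.1, fun hc => h.2 (by simpa using hc)⟩
      · exact Or.inr ⟨inv_mem h.1, fun hc => h.2 (by simpa using hc)⟩
    · rw [List.Chain', List.isChain_reverse, List.isChain_map]
      refine List.IsChain.imp ?_ hz.2.2
      intro a b hab
      constructor
      · intro hc
        exact hab.1 ⟨by simpa using hc.2, by simpa using hc.1⟩
      · intro hc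
        exact hab.2 ⟨by simpa using hc.2, by simpa using hc.1⟩

lemma phi_sup {g : 𝒢} (hg : g ∈ U ⊔ V) : Phi U V g := by
  have hg' : g ∈ Subgroup.closure ((U : Set 𝒢) ∪ (V : Set 𝒢)) := by
    rw [Subgroup.closure_union, Subgroup.closure_eq, Subgroup.closure_eq]
    exact hg
  refine Subgroup.closure_induction ?_ ?_ ?_ ?_ hg'
  · rintro x (hx | hx)
    · exact Or.inl hx
    · exact Or.inr (Or.inl hx)
  · exact Or.inl (one_mem U)
  · exact fun x y _ _ hx hy => phi_mul hx hy
  · exact fun x _ hx => phi_inv hx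

end AltPhi

/-- reversed reduced word -/
def Red (u : List 𝒢) : Prop :=
  u ≠ [] ∧ (∀ x ∈ u, (x ∈ 𝒜 ∧ x ∉ ℬ) ∨ (x ∈ ℬ ∧ x ∉ 𝒜)) ∧
    u.Chain' fun a b => b * a ∉ 𝒜 ∧ b * a ∉ ℬ

def rprod (u : List 𝒢) : 𝒢 := u.reverse.prod

noncomputable def cA (u : List 𝒢) : ℕ := u.countP fun x => decide (x ∈ 𝒜 ∧ x ∉ ℬ)

variable {𝒜 ℬ}

lemma rprod_cons {x : 𝒢} {u : List 𝒢} : rprod (x :: u) = rprod u * x := by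
  simp [rprod]

lemma rprod_singleton {x : 𝒢} : rprod [x] = x := by simp [rprod]

lemma cA_cons {x : 𝒢} {u : List 𝒢} :
    cA 𝒜 ℬ (x :: u) = cA 𝒜 ℬ u + if x ∈ 𝒜 ∧ x ∉ ℬ then 1 else 0 := by
  simp [cA, List.countP_cons]

lemma cA_nil : cA 𝒜 ℬ ([] : List 𝒢) = 0 := rfl

lemma cA_append {l l' : List 𝒢} : cA 𝒜 ℬ (l ++ l') = cA 𝒜 ℬ l + cA 𝒜 ℬ l' :=
  List.countP_append

lemma red_tail {x : 𝒢} {u : List 𝒢} (h : Red 𝒜 ℬ (x :: u)) (hu : u ≠ []) :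
    Red 𝒜 ℬ u :=
  ⟨hu, fun y hy => h.2.1 y (List.mem_cons_of_mem _ hy), (List.isChain_cons.1 h.2.2).2⟩

lemma red_reduced {u : List 𝒢} (h : Red 𝒜 ℬ u) :
    IsReducedWord (𝒜 : Set 𝒢) (ℬ : Set 𝒢) u.reverse := by
  refine ⟨by simpa using h.1, ?_, ?_⟩
  · intro x hx
    rw [List.mem_reverse] at hx
    rcases h.2.1 x hx with h' | h'
    · exact Or.inl h'
    · exact Or.inr h'
  · rw [List.Chain', List.isChain_reverse]
    refine List.IsChain.imp ?_ h.2.2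
    intro a b hab hc
    rcases hc with hc | hc
    · exact hab.1 hc
    · exact hab.2 hc

lemma red_rprod_ne_one (hamal : IsAmalgamated (𝒜 : Set 𝒢) (ℬ : Set 𝒢))
    {u : List 𝒢} (h : Red 𝒜 ℬ u) : rprod u ≠ 1 :=
  hamal u.reverse (red_reduced h)

lemma opp_of_memA {x z : 𝒢} (hz : (z ∈ 𝒜 ∧ z ∉ ℬ) ∨ (z ∈ ℬ ∧ z ∉ 𝒜))
    (hx : x ∈ 𝒜) (hne : z * x ∉ 𝒜 ∧ z * x ∉ ℬ) : z ∈ ℬ ∧ z ∉ 𝒜 := by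
  rcases hz with hz | hz
  · exact absurd (mul_mem hz.1 hx) hne.1
  · exact hz

lemma opp_of_memB {x z : 𝒢} (hz : (z ∈ 𝒜 ∧ z ∉ ℬ) ∨ (z ∈ ℬ ∧ z ∉ 𝒜))
    (hx : x ∈ ℬ) (hne : z * x ∉ 𝒜 ∧ z * x ∉ ℬ) : z ∈ 𝒜 ∧ z ∉ ℬ := by
  rcases hz with hz | hz
  · exact hz
  · exact absurd (mul_mem hz.1 hx) hne.2

lemma L0 (hamal : IsAmalgamated (𝒜 : Set 𝒢) (ℬ : Set 𝒢)) :
    ∀ (u : List 𝒢), Red 𝒜 ℬ u → 2 ≤ u.length → rprod u ∉ 𝒜 ∧ rprod u ∉ ℬ := by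
  suffices H : ∀ (n : ℕ) (u : List 𝒢), u.length ≤ n → Red 𝒜 ℬ u → 2 ≤ u.length →
      rprod u ∉ 𝒜 ∧ rprod u ∉ ℬ by
    exact fun u hu h2 => H u.length u le_rfl hu h2
  intro n
  induction n with
  | zero => intro u hlen _ h2; omega
  | succ n IH =>
    intro u hlen hu h2
    rcases u with _ | ⟨x, u'⟩
    · exact absurd rfl hu.1
    have hx := hu.2.1 x (List.mem_cons_self)
    have hu' : u' ≠ [] := by
      intro hc; subst hc; simp at h2
    have hru : Red 𝒜 ℬ u' := red_tail hu hu'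
    have hlen' : u'.length ≤ n := by simp at hlen; omega
    rw [rprod_cons]
    rcases hx with ⟨hxA, hxB⟩ | ⟨hxB, hxA⟩
    · -- x ∈ 𝒜 \ ℬ
      have hnA : rprod u' * x ∉ 𝒜 := by
        intro hgA
        have hpu' : rprod u' ∈ 𝒜 := by
          have he : rprod u' = (rprod u' * x) * x⁻¹ := by group
          rw [he]; exact mul_mem hgA (inv_mem hxA)
        rcases u' with _ | ⟨z, u''⟩
        · exact absurd rfl hu'
        rcases u'' with _ | ⟨w, u'''⟩
        · rw [rprod_singleton] at hpu'
          exact (List.isChain_cons_cons.1 hu.2.2).1.1 (mul_mem hpu' hxA)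
        · exact (IH (z :: w :: u''') hlen' hru (by simp)).1 hpu'
      refine ⟨hnA, fun hgB => ?_⟩
      have hred : Red 𝒜 ℬ ((rprod u' * x)⁻¹ :: x :: u') := by
        refine ⟨List.cons_ne_nil _ _, ?_, ?_⟩
        · intro y hy
          rcases List.mem_cons.1 hy with rfl | hy
          · exact Or.inr ⟨inv_mem hgB, fun hc => hnA (by simpa using inv_mem hc)⟩
          · exact hu.2.1 y hy
        · refine List.isChain_cons.2 ⟨?_, hu.2.2⟩
          intro y hy
          rw [List.head?_cons, Option.mem_some_iff] at hy; subst hy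
          constructor
          · intro hc
            exact hnA (by
              have : rprod u' * x = (x * (rprod u' * x)⁻¹)⁻¹ * x := by group
              rw [this]; exact mul_mem (inv_mem hc) hxA)
          · intro hc
            exact hxB (by
              have : x = (x * (rprod u' * x)⁻¹) * (rprod u' * x) := by group
              rw [this]; exact mul_mem hc hgB)
      exact red_rprod_ne_one hamal hred (by rw [rprod_cons, rprod_cons]; group)
    · -- x ∈ ℬ \ 𝒜
      have hnB : rprod u' * x ∉ ℬ := by
        intro hgB
        have hpu' : rprod u' ∈ ℬ := by
          have he : rprod u' = (rprod u' * x) * x⁻¹ := by group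
          rw [he]; exact mul_mem hgB (inv_mem hxB)
        rcases u' with _ | ⟨z, u''⟩
        · exact absurd rfl hu'
        rcases u'' with _ | ⟨w, u'''⟩
        · rw [rprod_singleton] at hpu'
          exact (List.isChain_cons_cons.1 hu.2.2).1.2 (mul_mem hpu' hxB)
        · exact (IH (z :: w :: u''') hlen' hru (by simp)).2 hpu'
      refine ⟨fun hgA => ?_, hnB⟩
      have hred : Red 𝒜 ℬ ((rprod u' * x)⁻¹ :: x :: u') := by
        refine ⟨List.cons_ne_nil _ _, ?_, ?_⟩
        · intro y hy
          rcases List.mem_cons.1 hy with rfl | hy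
          · exact Or.inl ⟨inv_mem hgA, fun hc => hnB (by simpa using inv_mem hc)⟩
          · exact hu.2.1 y hy
        · refine List.isChain_cons.2 ⟨?_, hu.2.2⟩
          intro y hy
          rw [List.head?_cons, Option.mem_some_iff] at hy; subst hy
          constructor
          · intro hc
            exact hxA (by
              have : x = (x * (rprod u' * x)⁻¹) * (rprod u' * x) := by group
              rw [this]; exact mul_mem hc hgA)
          · intro hc
            exact hnB (by
              have : rprod u' * x = (x * (rprod u' * x)⁻¹)⁻¹ * x := by group
              rw [this]; exact mul_mem (inv_mem hc) hxB)
      exact red_rprod_ne_one hamal hred (by rw [rprod_cons, rprod_cons]; group)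

lemma mulA_iff {z d : 𝒢} (hd : d ∈ 𝒜) : z * d ∈ 𝒜 ↔ z ∈ 𝒜 := by
  constructor
  · intro h
    have hz : z = z * d * d⁻¹ := by group
    rw [hz]; exact mul_mem h (inv_mem hd)
  · exact fun h => mul_mem h hd

lemma mulB_iff {z d : 𝒢} (hd : d ∈ ℬ) : z * d ∈ ℬ ↔ z ∈ ℬ := by
  constructor
  · intro h
    have hz : z = z * d * d⁻¹ := by group
    rw [hz]; exact mul_mem h (inv_mem hd)
  · exact fun h => mul_mem h hd

lemma L1 (hamal : IsAmalgamated (𝒜 : Set 𝒢) (ℬ : Set 𝒢)) :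
    ∀ (n : ℕ) (u v : List 𝒢), Red 𝒜 ℬ u → Red 𝒜 ℬ v → rprod u = rprod v →
      min u.length v.length ≤ n → u.length = v.length ∧ cA 𝒜 ℬ u = cA 𝒜 ℬ v := by
  intro n
  induction n with
  | zero =>
    intro u v hu hv _ hmin
    have h1 := List.length_pos_iff.2 hu.1
    have h2 := List.length_pos_iff.2 hv.1
    omega
  | succ n IH =>
    intro u v hu hv heq hmin
    rcases u with _ | ⟨x, u'⟩
    · exact absurd rfl hu.1
    rcases v with _ | ⟨y, v'⟩
    · exact absurd rfl hv.1
    have hx := hu.2.1 x (List.mem_cons_self)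
    have hy := hv.2.1 y (List.mem_cons_self)
    rcases eq_or_ne u' [] with rfl | hu'ne
    · rcases eq_or_ne v' [] with rfl | hv'ne
      · have hxy : x = y := by simpa [rprod_singleton] using heq
        subst hxy; exact ⟨rfl, rfl⟩
      · exfalso
        rcases v' with _ | ⟨w, v''⟩
        · exact absurd rfl hv'ne
        have hL0 := L0 hamal (y :: w :: v'') hv (by simp)
        rw [rprod_singleton] at heq
        rcases hx with hx | hx
        · exact hL0.1 (heq ▸ hx.1)
        · exact hL0.2 (heq ▸ hx.1)
    rcases eq_or_ne v' [] with rfl | hv'ne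
    · exfalso
      rcases u' with _ | ⟨z, u''⟩
      · exact absurd rfl hu'ne
      have hL0 := L0 hamal (x :: z :: u'') hu (by simp)
      rw [rprod_singleton] at heq
      rcases hy with hy | hy
      · exact hL0.1 (heq.symm ▸ hy.1)
      · exact hL0.2 (heq.symm ▸ hy.1)
    -- main case : both length ≥ 2
    rcases u' with _ | ⟨z, u''⟩
    · exact absurd rfl hu'ne
    rcases v' with _ | ⟨w, v''⟩
    · exact absurd rfl hv'ne
    have hru : Red 𝒜 ℬ (z :: u'') := red_tail hu (by simp)
    have hrv : Red 𝒜 ℬ (w :: v'') := red_tail hv (by simp)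
    have hz := hu.2.1 z (List.mem_cons_of_mem _ (List.mem_cons_self))
    have hw := hv.2.1 w (List.mem_cons_of_mem _ (List.mem_cons_self))
    have hrelxz : z * x ∉ 𝒜 ∧ z * x ∉ ℬ := (List.isChain_cons_cons.1 hu.2.2).1
    have hrelyw : w * y ∉ 𝒜 ∧ w * y ∉ ℬ := (List.isChain_cons_cons.1 hv.2.2).1
    rw [rprod_cons (x := x), rprod_cons (x := y)] at heq
    have hlenu : (x :: z :: u'').length = u''.length + 2 := by simp
    have hlenv : (y :: w :: v'').length = v''.length + 2 := by simp
    rcases hx with ⟨hxA, hxB⟩ | ⟨hxB, hxA⟩ <;> rcases hy with ⟨hyA, hyB⟩ | ⟨hyB, hyA⟩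
    · -- both 𝒜 \ ℬ
      have hdA : x * y⁻¹ ∈ 𝒜 := mul_mem hxA (inv_mem hyA)
      have heq' : rprod (z :: u'') * (x * y⁻¹) = rprod (w :: v'') := by
        rw [← mul_assoc, heq]; group
      by_cases hdB : x * y⁻¹ ∈ ℬ
      · -- fold
        have hfold : Red 𝒜 ℬ ((z * (x * y⁻¹)) :: u'') := by
          refine ⟨List.cons_ne_nil _ _, ?_, ?_⟩
          · intro t ht
            rcases List.mem_cons.1 ht with rfl | ht
            · rcases hz with ⟨hzA, hzB⟩ | ⟨hzB, hzA⟩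
              · exact Or.inl ⟨mul_mem hzA hdA, fun hc => hzB ((mulB_iff hdB).1 hc)⟩
              · exact Or.inr ⟨mul_mem hzB hdB, fun hc => hzA ((mulA_iff hdA).1 hc)⟩
            · exact hru.2.1 t (List.mem_cons_of_mem _ ht)
          · refine List.isChain_cons.2 ⟨?_, (List.isChain_cons.1 hru.2.2).2⟩
            intro t ht
            have hb := (List.isChain_cons.1 hru.2.2).1 t ht
            constructor
            · intro hc; exact hb.1 ((mulA_iff hdA).1 (by rwa [← mul_assoc] at hc))
            · intro hc; exact hb.2 ((mulB_iff hdB).1 (by rwa [← mul_assoc] at hc))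
        have heq'' : rprod ((z * (x * y⁻¹)) :: u'') = rprod (w :: v'') := by
          rw [rprod_cons (x := z)] at heq'
          rw [rprod_cons (x := z * (x * y⁻¹)), ← mul_assoc]; exact heq'
        have hmin' : min ((z * (x * y⁻¹)) :: u'').length (w :: v'').length ≤ n := by
          simp at hmin ⊢; omega
        obtain ⟨hl, hc⟩ := IH _ _ hfold hrv heq'' hmin'
        constructor
        · simp at hl ⊢; omega
        · have hiff : (z * (x * y⁻¹) ∈ 𝒜 ∧ z * (x * y⁻¹) ∉ ℬ) ↔ (z ∈ 𝒜 ∧ z ∉ ℬ) := by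
            rw [mulA_iff hdA, mulB_iff hdB]
          simp only [cA_cons] at hc ⊢
          rw [if_congr hiff rfl rfl] at hc
          rw [if_pos (show x ∈ 𝒜 ∧ x ∉ ℬ from ⟨hxA, hxB⟩), if_pos (show y ∈ 𝒜 ∧ y ∉ ℬ from ⟨hyA, hyB⟩)]
          omega
      · -- no fold : impossible
        exfalso
        have hzB : z ∈ ℬ ∧ z ∉ 𝒜 := opp_of_memA hz hxA hrelxz
        have hwB : w ∈ ℬ ∧ w ∉ 𝒜 := opp_of_memA hw hyA hrelyw
        by_cases hle : (w :: v'').length ≤ (z :: u'').length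
        · have hred : Red 𝒜 ℬ ((x * y⁻¹) :: z :: u'') := by
            refine ⟨List.cons_ne_nil _ _, ?_, ?_⟩
            · intro t ht
              rcases List.mem_cons.1 ht with rfl | ht
              · exact Or.inl ⟨hdA, hdB⟩
              · exact hru.2.1 t ht
            · refine List.isChain_cons.2 ⟨?_, hru.2.2⟩
              intro t ht
              rw [List.head?_cons, Option.mem_some_iff] at ht; subst ht
              exact ⟨fun hc => hzB.2 ((mulA_iff hdA).1 hc),
                fun hc => hdB (by
                  have : x * y⁻¹ = z⁻¹ * (z * (x * y⁻¹)) := by group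
                  rw [this]; exact mul_mem (inv_mem hzB.1) hc)⟩
          have heq'' : rprod ((x * y⁻¹) :: z :: u'') = rprod (w :: v'') := by
            rw [rprod_cons (x := x * y⁻¹)]; exact heq'
          have hmin' : min ((x * y⁻¹) :: z :: u'').length (w :: v'').length ≤ n := by
            simp at hmin hle ⊢; omega
          obtain ⟨hl, -⟩ := IH _ _ hred hrv heq'' hmin'
          simp at hl hle; omega
        · have hred : Red 𝒜 ℬ ((x * y⁻¹)⁻¹ :: w :: v'') := by
            refine ⟨List.cons_ne_nil _ _, ?_, ?_⟩
            · intro t ht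
              rcases List.mem_cons.1 ht with rfl | ht
              · exact Or.inl ⟨inv_mem hdA, fun hc => hdB (by simpa using inv_mem hc)⟩
              · exact hrv.2.1 t ht
            · refine List.isChain_cons.2 ⟨?_, hrv.2.2⟩
              intro t ht
              rw [List.head?_cons, Option.mem_some_iff] at ht; subst ht
              exact ⟨fun hc => hwB.2 ((mulA_iff (inv_mem hdA)).1 hc),
                fun hc => hdB (by
                  have : x * y⁻¹ = (w * (x * y⁻¹)⁻¹)⁻¹ * w := by group
                  rw [this]; exact mul_mem (inv_mem hc) hwB.1)⟩
          have heq'' : rprod ((x * y⁻¹)⁻¹ :: w :: v'') = rprod (z :: u'') := by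
            rw [rprod_cons (x := (x * y⁻¹)⁻¹), ← heq']; group
          have hmin' : min ((x * y⁻¹)⁻¹ :: w :: v'').length (z :: u'').length ≤ n := by
            simp at hmin hle ⊢; omega
          obtain ⟨hl, -⟩ := IH _ _ hred hru heq'' hmin'
          simp at hl hle; omega
    · -- x ∈ 𝒜 \ ℬ, y ∈ ℬ \ 𝒜 : mixed, impossible
      exfalso
      by_cases hle : (y :: w :: v'').length ≤ (x :: z :: u'').length
      · have hred : Red 𝒜 ℬ (y⁻¹ :: x :: z :: u'') := by
          refine ⟨List.cons_ne_nil _ _, ?_, ?_⟩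
          · intro t ht
            rcases List.mem_cons.1 ht with rfl | ht
            · exact Or.inr ⟨inv_mem hyB, fun hc => hyA (by simpa using inv_mem hc)⟩
            · exact hu.2.1 t ht
          · refine List.isChain_cons.2 ⟨?_, hu.2.2⟩
            intro t ht
            rw [List.head?_cons, Option.mem_some_iff] at ht; subst ht
            constructor
            · intro hc; exact hyA (by
                have : y = (x * y⁻¹)⁻¹ * x := by group
                rw [this]; exact mul_mem (inv_mem hc) hxA)
            · intro hc; exact hxB (by
                have : x = x * y⁻¹ * y := by group
                rw [this]; exact mul_mem hc hyB)
        have heq'' : rprod (y⁻¹ :: x :: z :: u'') = rprod (w :: v'') := by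
          rw [rprod_cons (x := y⁻¹), rprod_cons (x := x), heq]; group
        have hmin' : min (y⁻¹ :: x :: z :: u'').length (w :: v'').length ≤ n := by
          simp at hmin hle ⊢; omega
        obtain ⟨hl, -⟩ := IH _ _ hred hrv heq'' hmin'
        simp at hl hle; omega
      · have hred : Red 𝒜 ℬ (x⁻¹ :: y :: w :: v'') := by
          refine ⟨List.cons_ne_nil _ _, ?_, ?_⟩
          · intro t ht
            rcases List.mem_cons.1 ht with rfl | ht
            · exact Or.inl ⟨inv_mem hxA, fun hc => hxB (by simpa using inv_mem hc)⟩
            · exact hv.2.1 t ht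
          · refine List.isChain_cons.2 ⟨?_, hv.2.2⟩
            intro t ht
            rw [List.head?_cons, Option.mem_some_iff] at ht; subst ht
            constructor
            · intro hc; exact hyA (by
                have : y = y * x⁻¹ * x := by group
                rw [this]; exact mul_mem hc hxA)
            · intro hc; exact hxB (by
                have : x = (y * x⁻¹)⁻¹ * y := by group
                rw [this]; exact mul_mem (inv_mem hc) hyB)
        have heq'' : rprod (x⁻¹ :: y :: w :: v'') = rprod (z :: u'') := by
          rw [rprod_cons (x := x⁻¹), rprod_cons (x := y), ← heq]; group
        have hmin' : min (x⁻¹ :: y :: w :: v'').length (z :: u'').length ≤ n := by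
          simp at hmin hle ⊢; omega
        obtain ⟨hl, -⟩ := IH _ _ hred hru heq'' hmin'
        simp at hl hle; omega
    · -- x ∈ ℬ \ 𝒜, y ∈ 𝒜 \ ℬ : mixed, impossible
      exfalso
      by_cases hle : (y :: w :: v'').length ≤ (x :: z :: u'').length
      · have hred : Red 𝒜 ℬ (y⁻¹ :: x :: z :: u'') := by
          refine ⟨List.cons_ne_nil _ _, ?_, ?_⟩
          · intro t ht
            rcases List.mem_cons.1 ht with rfl | ht
            · exact Or.inl ⟨inv_mem hyA, fun hc => hyB (by simpa using inv_mem hc)⟩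
            · exact hu.2.1 t ht
          · refine List.isChain_cons.2 ⟨?_, hu.2.2⟩
            intro t ht
            rw [List.head?_cons, Option.mem_some_iff] at ht; subst ht
            constructor
            · intro hc; exact hxA (by
                have : x = x * y⁻¹ * y := by group
                rw [this]; exact mul_mem hc hyA)
            · intro hc; exact hyB (by
                have : y = (x * y⁻¹)⁻¹ * x := by group
                rw [this]; exact mul_mem (inv_mem hc) hxB)
        have heq'' : rprod (y⁻¹ :: x :: z :: u'') = rprod (w :: v'') := by
          rw [rprod_cons (x := y⁻¹), rprod_cons (x := x), heq]; group
        have hmin' : min (y⁻¹ :: x :: z :: u'').length (w :: v'').length ≤ n := by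
          simp at hmin hle ⊢; omega
        obtain ⟨hl, -⟩ := IH _ _ hred hrv heq'' hmin'
        simp at hl hle; omega
      · have hred : Red 𝒜 ℬ (x⁻¹ :: y :: w :: v'') := by
          refine ⟨List.cons_ne_nil _ _, ?_, ?_⟩
          · intro t ht
            rcases List.mem_cons.1 ht with rfl | ht
            · exact Or.inr ⟨inv_mem hxB, fun hc => hxA (by simpa using inv_mem hc)⟩
            · exact hv.2.1 t ht
          · refine List.isChain_cons.2 ⟨?_, hv.2.2⟩
            intro t ht
            rw [List.head?_cons, Option.mem_some_iff] at ht; subst ht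
            constructor
            · intro hc; exact hxA (by
                have : x = (y * x⁻¹)⁻¹ * y := by group
                rw [this]; exact mul_mem (inv_mem hc) hyA)
            · intro hc; exact hyB (by
                have : y = y * x⁻¹ * x := by group
                rw [this]; exact mul_mem hc hxB)
        have heq'' : rprod (x⁻¹ :: y :: w :: v'') = rprod (z :: u'') := by
          rw [rprod_cons (x := x⁻¹), rprod_cons (x := y), ← heq]; group
        have hmin' : min (x⁻¹ :: y :: w :: v'').length (z :: u'').length ≤ n := by
          simp at hmin hle ⊢; omega
        obtain ⟨hl, -⟩ := IH _ _ hred hru heq'' hmin'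
        simp at hl hle; omega
    · -- both ℬ \ 𝒜
      have hdB : x * y⁻¹ ∈ ℬ := mul_mem hxB (inv_mem hyB)
      have heq' : rprod (z :: u'') * (x * y⁻¹) = rprod (w :: v'') := by
        rw [← mul_assoc, heq]; group
      by_cases hdA : x * y⁻¹ ∈ 𝒜
      · -- fold
        have hfold : Red 𝒜 ℬ ((z * (x * y⁻¹)) :: u'') := by
          refine ⟨List.cons_ne_nil _ _, ?_, ?_⟩
          · intro t ht
            rcases List.mem_cons.1 ht with rfl | ht
            · rcases hz with ⟨hzA, hzB⟩ | ⟨hzB, hzA⟩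
              · exact Or.inl ⟨mul_mem hzA hdA, fun hc => hzB ((mulB_iff hdB).1 hc)⟩
              · exact Or.inr ⟨mul_mem hzB hdB, fun hc => hzA ((mulA_iff hdA).1 hc)⟩
            · exact hru.2.1 t (List.mem_cons_of_mem _ ht)
          · refine List.isChain_cons.2 ⟨?_, (List.isChain_cons.1 hru.2.2).2⟩
            intro t ht
            have hb := (List.isChain_cons.1 hru.2.2).1 t ht
            constructor
            · intro hc; exact hb.1 ((mulA_iff hdA).1 (by rwa [← mul_assoc] at hc))
            · intro hc; exact hb.2 ((mulB_iff hdB).1 (by rwa [← mul_assoc] at hc))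
        have heq'' : rprod ((z * (x * y⁻¹)) :: u'') = rprod (w :: v'') := by
          rw [rprod_cons (x := z)] at heq'
          rw [rprod_cons (x := z * (x * y⁻¹)), ← mul_assoc]; exact heq'
        have hmin' : min ((z * (x * y⁻¹)) :: u'').length (w :: v'').length ≤ n := by
          simp at hmin ⊢; omega
        obtain ⟨hl, hc⟩ := IH _ _ hfold hrv heq'' hmin'
        constructor
        · simp at hl ⊢; omega
        · have hiff : (z * (x * y⁻¹) ∈ 𝒜 ∧ z * (x * y⁻¹) ∉ ℬ) ↔ (z ∈ 𝒜 ∧ z ∉ ℬ) := by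
            rw [mulA_iff hdA, mulB_iff hdB]
          simp only [cA_cons] at hc ⊢
          rw [if_congr hiff rfl rfl] at hc
          rw [if_neg (show ¬(x ∈ 𝒜 ∧ x ∉ ℬ) from fun hc' => hxA hc'.1), if_neg (show ¬(y ∈ 𝒜 ∧ y ∉ ℬ) from fun hc' => hyA hc'.1)]
          omega
      · -- no fold : impossible
        exfalso
        have hzA' : z ∈ 𝒜 ∧ z ∉ ℬ := opp_of_memB hz hxB hrelxz
        have hwA' : w ∈ 𝒜 ∧ w ∉ ℬ := opp_of_memB hw hyB hrelyw
        by_cases hle : (w :: v'').length ≤ (z :: u'').length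
        · have hred : Red 𝒜 ℬ ((x * y⁻¹) :: z :: u'') := by
            refine ⟨List.cons_ne_nil _ _, ?_, ?_⟩
            · intro t ht
              rcases List.mem_cons.1 ht with rfl | ht
              · exact Or.inr ⟨hdB, hdA⟩
              · exact hru.2.1 t ht
            · refine List.isChain_cons.2 ⟨?_, hru.2.2⟩
              intro t ht
              rw [List.head?_cons, Option.mem_some_iff] at ht; subst ht
              exact ⟨fun hc => hdA (by
                  have : x * y⁻¹ = z⁻¹ * (z * (x * y⁻¹)) := by group
                  rw [this]; exact mul_mem (inv_mem hzA'.1) hc),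
                fun hc => hzA'.2 ((mulB_iff hdB).1 hc)⟩
          have heq'' : rprod ((x * y⁻¹) :: z :: u'') = rprod (w :: v'') := by
            rw [rprod_cons (x := x * y⁻¹)]; exact heq'
          have hmin' : min ((x * y⁻¹) :: z :: u'').length (w :: v'').length ≤ n := by
            simp at hmin hle ⊢; omega
          obtain ⟨hl, -⟩ := IH _ _ hred hrv heq'' hmin'
          simp at hl hle; omega
        · have hred : Red 𝒜 ℬ ((x * y⁻¹)⁻¹ :: w :: v'') := by
            refine ⟨List.cons_ne_nil _ _, ?_, ?_⟩
            · intro t ht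
              rcases List.mem_cons.1 ht with rfl | ht
              · exact Or.inr ⟨inv_mem hdB, fun hc => hdA (by simpa using inv_mem hc)⟩
              · exact hrv.2.1 t ht
            · refine List.isChain_cons.2 ⟨?_, hrv.2.2⟩
              intro t ht
              rw [List.head?_cons, Option.mem_some_iff] at ht; subst ht
              exact ⟨fun hc => hdA (by
                  have : x * y⁻¹ = (w * (x * y⁻¹)⁻¹)⁻¹ * w := by group
                  rw [this]; exact mul_mem (inv_mem hc) hwA'.1),
                fun hc => hwA'.2 ((mulB_iff (inv_mem hdB)).1 hc)⟩
          have heq'' : rprod ((x * y⁻¹)⁻¹ :: w :: v'') = rprod (z :: u'') := by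
            rw [rprod_cons (x := (x * y⁻¹)⁻¹), ← heq']; group
          have hmin' : min ((x * y⁻¹)⁻¹ :: w :: v'').length (z :: u'').length ≤ n := by
            simp at hmin hle ⊢; omega
          obtain ⟨hl, -⟩ := IH _ _ hred hru heq'' hmin'
          simp at hl hle; omega

lemma chain'_of_mem {α : Type*} {P : α → Prop} {r r' : α → α → Prop}
    (H : ∀ a b, P a → P b → r a b → r' a b) :
    ∀ l : List α, (∀ x ∈ l, P x) → List.Chain' r l → List.Chain' r' l := by
  intro l
  induction l with
  | nil => simp [List.Chain']
  | cons a l ih =>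
    intro hP hc
    rcases l with _ | ⟨b, l'⟩
    · simp [List.Chain']
    · rw [List.Chain', List.isChain_cons_cons] at hc ⊢
      exact ⟨H a b (hP a (by simp)) (hP b (by simp)) hc.1,
        ih (fun x hx => hP x (List.mem_cons_of_mem _ hx)) hc.2⟩

lemma NFW (ℋ : Subgroup 𝒢) (hcomp₂ : ℋ = (𝒜 ⊓ ℋ) ⊔ (ℬ ⊓ ℋ))
    {ζ : 𝒢} (hζH : ζ ∈ ℋ) (hζB : ζ ∉ ℬ) :
    ∃ W : List 𝒢, W ≠ [] ∧ W.prod = ζ ∧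
      (∀ x ∈ W, x ∈ ℋ ∧ ((x ∈ 𝒜 ∧ x ∉ ℬ) ∨ (x ∈ ℬ ∧ x ∉ 𝒜))) ∧
      W.Chain' (fun a b => ¬(a ∈ 𝒜 ∧ b ∈ 𝒜) ∧ ¬(a ∈ ℬ ∧ b ∈ ℬ)) ∧
      1 ≤ cA 𝒜 ℬ W := by
  have hsup : ζ ∈ (𝒜 ⊓ ℋ) ⊔ (ℬ ⊓ ℋ) := hcomp₂ ▸ hζH
  rcases phi_sup hsup with hζ | hζ | ⟨z, hz, hprod⟩
  · have hA := (Subgroup.mem_inf.1 hζ).1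
    refine ⟨[ζ], by simp, by simp, ?_, by simp [List.Chain'], ?_⟩
    · intro x hx; rw [List.mem_singleton] at hx; subst hx
      exact ⟨(Subgroup.mem_inf.1 hζ).2, Or.inl ⟨hA, hζB⟩⟩
    · show 1 ≤ cA 𝒜 ℬ (ζ :: [])
      rw [cA_cons, if_pos ⟨hA, hζB⟩]
      omega
  · exact absurd (Subgroup.mem_inf.1 hζ).1 hζB
  · have hlet : ∀ x ∈ z, x ∈ ℋ ∧ ((x ∈ 𝒜 ∧ x ∉ ℬ) ∨ (x ∈ ℬ ∧ x ∉ 𝒜)) := by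
      intro x hx
      rcases hz.2.1 x hx with ⟨h1, h2⟩ | ⟨h1, h2⟩
      · have hxH := (Subgroup.mem_inf.1 h1).2
        exact ⟨hxH, Or.inl ⟨(Subgroup.mem_inf.1 h1).1,
          fun hc => h2 (Subgroup.mem_inf.2 ⟨hc, hxH⟩)⟩⟩
      · have hxH := (Subgroup.mem_inf.1 h1).2
        exact ⟨hxH, Or.inr ⟨(Subgroup.mem_inf.1 h1).1,
          fun hc => h2 (Subgroup.mem_inf.2 ⟨hc, hxH⟩)⟩⟩
    refine ⟨z, hz.1, hprod, hlet, ?_, ?_⟩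
    · refine chain'_of_mem ?_ z (fun x hx => hlet x hx) hz.2.2
      rintro x y ⟨hxH, hxl⟩ ⟨hyH, hyl⟩ hr
      constructor
      · intro ⟨hx', hy'⟩
        exact hr.1 ⟨Subgroup.mem_inf.2 ⟨hx', hxH⟩, Subgroup.mem_inf.2 ⟨hy', hyH⟩⟩
      · intro ⟨hx', hy'⟩
        exact hr.2 ⟨Subgroup.mem_inf.2 ⟨hx', hxH⟩, Subgroup.mem_inf.2 ⟨hy', hyH⟩⟩
    · rcases z with _ | ⟨x, z'⟩
      · exact absurd rfl hz.1
      rcases (hlet x (by simp)).2 with ⟨hxA, hxB⟩ | ⟨hxB, hxA⟩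
      · rw [cA_cons, if_pos ⟨hxA, hxB⟩]; omega
      · rcases z' with _ | ⟨y, z''⟩
        · exfalso
          rw [List.prod_singleton] at hprod
          exact hζB (hprod ▸ hxB)
        · have hry := (List.isChain_cons_cons.1 hz.2.2).1
          have hyH := (hlet y (by simp)).1
          have hxH := (hlet x (by simp)).1
          have hyA : y ∈ 𝒜 ∧ y ∉ ℬ := by
            rcases (hlet y (by simp)).2 with hy | hy
            · exact hy
            · exact absurd ⟨Subgroup.mem_inf.2 ⟨hxB, hxH⟩,
                Subgroup.mem_inf.2 ⟨hy.1, hyH⟩⟩ hry.2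
          rw [cA_cons, cA_cons, if_pos hyA]; omega

lemma build (ℋ K : Subgroup 𝒢) (hcomp₁ : 𝒜 ⊓ ℬ ≤ ℋ)
    (hcomp₂ : ℋ = (𝒜 ⊓ ℋ) ⊔ (ℬ ⊓ ℋ)) :
    ∀ z : List 𝒢, Alt (ℋ ⊓ K) (ℬ ⊓ K) z →
    ∃ R : List 𝒢, R ≠ [] ∧ R.prod = z.prod ∧
      (∀ x ∈ R, (x ∈ 𝒜 ∧ x ∉ ℬ) ∨ (x ∈ ℬ ∧ x ∉ 𝒜)) ∧
      R.Chain' (fun a b => ¬(a ∈ 𝒜 ∧ b ∈ 𝒜) ∧ ¬(a ∈ ℬ ∧ b ∈ ℬ)) ∧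
      z.countP (fun x => decide (x ∈ ℋ)) ≤ cA 𝒜 ℬ R ∧
      (∀ a ∈ z.head?, ∀ r ∈ R.head?,
        (a ∈ ℋ → (r ∈ ℬ → r ∈ ℋ)) ∧
        (a ∉ ℋ → (r ∈ ℬ ∧ ∃ y p, y ∉ ℋ ∧ p ∈ ℋ ∧ r = y * p))) := by
  intro z
  induction z with
  | nil => exact fun hz => absurd rfl hz.1
  | cons a z' IH =>
    intro hz
    have ha := hz.2.1 a (List.mem_cons_self)
    rcases eq_or_ne z' [] with rfl | hne
    · -- singleton
      rcases ha with ⟨haU, haV⟩ | ⟨haV, haU⟩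
      · have haH : a ∈ ℋ := (Subgroup.mem_inf.1 haU).1
        have haK : a ∈ K := (Subgroup.mem_inf.1 haU).2
        have haB : a ∉ ℬ := fun hc => haV (Subgroup.mem_inf.2 ⟨hc, haK⟩)
        obtain ⟨W, hWne, hWprod, hWlet, hWch, hWcA⟩ := NFW ℋ hcomp₂ haH haB
        refine ⟨W, hWne, by simpa using hWprod, fun x hx => (hWlet x hx).2, hWch, ?_, ?_⟩
        · have h1 : (a :: ([] : List 𝒢)).countP (fun x => decide (x ∈ ℋ)) = 1 := by
            simp [List.countP_cons, haH]
          rw [h1]; exact hWcA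
        · intro a' ha' r hr
          rw [List.head?_cons, Option.mem_some_iff] at ha'; subst ha'
          refine ⟨fun _ _ => ?_, fun hc => absurd haH hc⟩
          rcases W with _ | ⟨w₀, Wt⟩
          · exact absurd rfl hWne
          · rw [List.head?_cons, Option.mem_some_iff] at hr; subst hr
            exact (hWlet _ (List.mem_cons_self)).1
      · have haB : a ∈ ℬ := (Subgroup.mem_inf.1 haV).1
        have haK : a ∈ K := (Subgroup.mem_inf.1 haV).2
        have haH : a ∉ ℋ := fun hc => haU (Subgroup.mem_inf.2 ⟨hc, haK⟩)
        have haA : a ∉ 𝒜 := fun hc => haH (hcomp₁ (Subgroup.mem_inf.2 ⟨hc, haB⟩))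
        refine ⟨[a], by simp, by simp, ?_, by simp [List.Chain'], ?_, ?_⟩
        · intro x hx; rw [List.mem_singleton] at hx; subst hx
          exact Or.inr ⟨haB, haA⟩
        · simp [List.countP_cons, haH]
        · intro a' ha' r hr
          rw [List.head?_cons, Option.mem_some_iff] at ha'; subst ha'
          rw [List.head?_cons, Option.mem_some_iff] at hr; subst hr
          exact ⟨fun hc => absurd hc haH,
            fun _ => ⟨haB, a, 1, haH, one_mem _, (mul_one a).symm⟩⟩
    · -- z' nonempty
      obtain ⟨R', hR'ne, hR'prod, hR'let, hR'ch, hR'cA, hR'head⟩ := IH (alt_tail hz hne)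
      rcases z' with _ | ⟨b, z''⟩
      · exact absurd rfl hne
      have hb := hz.2.1 b (List.mem_cons_of_mem _ (List.mem_cons_self))
      have hrel := (List.isChain_cons_cons.1 hz.2.2).1
      rcases R' with _ | ⟨r, R''⟩
      · exact absurd rfl hR'ne
      have hrlet := hR'let r (List.mem_cons_self)
      have hrhead := hR'head b (by simp) r (by simp)
      rcases ha with ⟨haU, haV⟩ | ⟨haV, haU⟩
      · -- a ∈ ℋ-side
        have haH : a ∈ ℋ := (Subgroup.mem_inf.1 haU).1
        have haK : a ∈ K := (Subgroup.mem_inf.1 haU).2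
        have haB : a ∉ ℬ := fun hc => haV (Subgroup.mem_inf.2 ⟨hc, haK⟩)
        have hbV : b ∈ ℬ ⊓ K := by
          rcases hb with hb | hb
          · exact absurd ⟨haU, hb.1⟩ hrel.1
          · exact hb.1
        have hbK : b ∈ K := (Subgroup.mem_inf.1 hbV).2
        have hbH : b ∉ ℋ := fun hc => hrel.1 ⟨haU, Subgroup.mem_inf.2 ⟨hc, hbK⟩⟩
        obtain ⟨W, hWne, hWprod, hWlet, hWch, hWcA⟩ := NFW ℋ hcomp₂ haH haB
        obtain ⟨hrB, y, p, hyH, hpH, hr_eq⟩ := hrhead.2 hbH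
        have hrA : r ∉ 𝒜 := by
          rcases hrlet with h | h
          · exact absurd hrB h.2
          · exact h.2
        obtain ⟨W₀, ω, rfl⟩ : ∃ W₀ ω, W = W₀ ++ [ω] :=
          ⟨W.dropLast, W.getLast hWne, (List.dropLast_append_getLast hWne).symm⟩
        have hωH : ω ∈ ℋ := (hWlet ω (by simp)).1
        have hWbound : ∀ x ∈ W₀.getLast?, ¬(x ∈ 𝒜 ∧ ω ∈ 𝒜) ∧ ¬(x ∈ ℬ ∧ ω ∈ ℬ) := by
          intro x hx
          exact (List.isChain_append.1 hWch).2.2 x hx ω (by simp)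
        have hW₀prod : W₀.prod * ω = a := by
          rw [← hWprod, List.prod_append, List.prod_singleton]
        have hcnt : (a :: b :: z'').countP (fun x => decide (x ∈ ℋ)) =
            (b :: z'').countP (fun x => decide (x ∈ ℋ)) + 1 := by
          simp [List.countP_cons, haH]
        rcases (hWlet ω (by simp)).2 with ⟨hωA, hωB⟩ | ⟨hωB, hωA⟩
        · -- ω on the 𝒜 side : plain concatenation
          refine ⟨(W₀ ++ [ω]) ++ (r :: R''), by simp, ?_, ?_, ?_, ?_, ?_⟩
          · simp only [List.prod_append, List.prod_cons, List.prod_nil] at hWprod hR'prod ⊢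
            rw [← hWprod, ← hR'prod]; done
          · intro x hx
            rcases List.mem_append.1 hx with hx | hx
            · exact (hWlet x hx).2
            · exact hR'let x hx
          · refine List.isChain_append.2 ⟨hWch, hR'ch, ?_⟩
            intro x hx t ht
            rw [List.getLast?_concat, Option.mem_some_iff] at hx; subst hx
            rw [List.head?_cons, Option.mem_some_iff] at ht; subst ht
            exact ⟨fun hc => hrA hc.2, fun hc => hωB hc.1⟩
          · rw [hcnt]
            have e1 : cA 𝒜 ℬ ((W₀ ++ [ω]) ++ (r :: R'')) =
                cA 𝒜 ℬ (W₀ ++ [ω]) + cA 𝒜 ℬ (r :: R'') := cA_append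
            rw [e1]
            omega
          · intro a' ha' t ht
            rw [List.head?_cons, Option.mem_some_iff] at ha'; subst ha'
            refine ⟨fun _ _ => ?_, fun hc => absurd haH hc⟩
            rcases W₀ with _ | ⟨w₀, W₀t⟩
            · simp at ht; subst ht; exact hωH
            · simp at ht; subst ht; exact (hWlet w₀ (by simp)).1
        · -- ω on the ℬ side : merge with r
          rcases W₀ with _ | ⟨w₀, W₀t⟩
          · exfalso
            rw [List.prod_nil, one_mul] at hW₀prod
            exact haB (hW₀prod ▸ hωB)
          · have hmB : ω * r ∈ ℬ := mul_mem hωB hrB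
            have hmA : ω * r ∉ 𝒜 := by
              intro hc
              have hmH : ω * r ∈ ℋ := hcomp₁ (Subgroup.mem_inf.2 ⟨hc, hmB⟩)
              have hy : y = ω⁻¹ * (ω * r) * p⁻¹ := by rw [hr_eq]; group
              exact hyH (hy ▸ mul_mem (mul_mem (inv_mem hωH) hmH) (inv_mem hpH))
            refine ⟨(w₀ :: W₀t) ++ ((ω * r) :: R''), by simp, ?_, ?_, ?_, ?_, ?_⟩
            · have h2 : r * R''.prod = (b :: z'').prod := by
                rw [← hR'prod, List.prod_cons]
              simp only [List.prod_cons] at hW₀prod h2 ⊢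
              rw [List.prod_append]
              simp only [List.prod_cons]
              rw [← hW₀prod, ← h2]; group
            · intro x hx
              rcases List.mem_append.1 hx with hx | hx
              · exact (hWlet x (List.mem_append_left _ hx)).2
              · rcases List.mem_cons.1 hx with rfl | hx
                · exact Or.inr ⟨hmB, hmA⟩
                · exact hR'let x (List.mem_cons_of_mem _ hx)
            · refine List.isChain_append.2 ⟨(List.isChain_append.1 hWch).1, ?_, ?_⟩
              · refine List.isChain_cons.2 ⟨?_, (List.isChain_cons.1 hR'ch).2⟩
                intro t ht
                have hold := (List.isChain_cons.1 hR'ch).1 t ht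
                exact ⟨fun hc => hmA hc.1, fun hc => hold.2 ⟨hrB, hc.2⟩⟩
              · intro x hx t ht
                rw [List.head?_cons, Option.mem_some_iff] at ht; subst ht
                have hold := hWbound x hx
                exact ⟨fun hc => hmA hc.2, fun hc => hold.2 ⟨hc.1, hωB⟩⟩
            · rw [hcnt]
              have e1 : cA 𝒜 ℬ ((w₀ :: W₀t) ++ ((ω * r) :: R'')) =
                  cA 𝒜 ℬ (w₀ :: W₀t) + cA 𝒜 ℬ ((ω * r) :: R'') := cA_append
              have e2 : cA 𝒜 ℬ ((ω * r) :: R'') = cA 𝒜 ℬ R'' := by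
                rw [cA_cons, if_neg (fun hc => hmA hc.1), Nat.add_zero]
              have e3 : cA 𝒜 ℬ (r :: R'') = cA 𝒜 ℬ R'' := by
                rw [cA_cons, if_neg (fun hc => hrA hc.1), Nat.add_zero]
              have e5 : cA 𝒜 ℬ [ω] = 0 := by
                show cA 𝒜 ℬ (ω :: []) = 0
                rw [cA_cons, if_neg (fun hc => hωA hc.1), Nat.add_zero, cA_nil]
              have e6 : cA 𝒜 ℬ ((w₀ :: W₀t) ++ [ω]) =
                  cA 𝒜 ℬ (w₀ :: W₀t) + cA 𝒜 ℬ [ω] := cA_append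
              omega
            · intro a' ha' t ht
              rw [List.head?_cons, Option.mem_some_iff] at ha'; subst ha'
              rw [List.cons_append, List.head?_cons, Option.mem_some_iff] at ht; subst ht
              exact ⟨fun _ _ => (hWlet w₀ (by simp)).1, fun hc => absurd haH hc⟩
      · -- a ∈ ℬ-side
        have haB : a ∈ ℬ := (Subgroup.mem_inf.1 haV).1
        have haK : a ∈ K := (Subgroup.mem_inf.1 haV).2
        have haH : a ∉ ℋ := fun hc => haU (Subgroup.mem_inf.2 ⟨hc, haK⟩)
        have haA : a ∉ 𝒜 := fun hc => haH (hcomp₁ (Subgroup.mem_inf.2 ⟨hc, haB⟩))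
        have hbU : b ∈ ℋ ⊓ K := by
          rcases hb with hb | hb
          · exact hb.1
          · exact absurd ⟨haV, hb.1⟩ hrel.2
        have hbH : b ∈ ℋ := (Subgroup.mem_inf.1 hbU).1
        have hcnt : (a :: b :: z'').countP (fun x => decide (x ∈ ℋ)) =
            (b :: z'').countP (fun x => decide (x ∈ ℋ)) := by
          simp [List.countP_cons, haH]
        rcases hrlet with ⟨hrA, hrB⟩ | ⟨hrB, hrA⟩
        · -- prepend a
          refine ⟨a :: r :: R'', by simp, ?_, ?_, ?_, ?_, ?_⟩
          · simp only [List.prod_cons] at hR'prod ⊢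
            rw [hR'prod]
          · intro x hx
            rcases List.mem_cons.1 hx with rfl | hx
            · exact Or.inr ⟨haB, haA⟩
            · exact hR'let x hx
          · exact List.isChain_cons_cons.2 ⟨⟨fun hc => haA hc.1, fun hc => hrB hc.2⟩, hR'ch⟩
          · rw [hcnt]
            have e2 : cA 𝒜 ℬ (a :: r :: R'') = cA 𝒜 ℬ (r :: R'') := by
              rw [cA_cons (x := a), if_neg (fun hc => haA hc.1), Nat.add_zero]
            rw [e2]; exact hR'cA
          · intro a' ha' t ht
            rw [List.head?_cons, Option.mem_some_iff] at ha'; subst ha'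
            rw [List.head?_cons, Option.mem_some_iff] at ht; subst ht
            exact ⟨fun hc => absurd hc haH,
              fun _ => ⟨haB, a, 1, haH, one_mem _, (mul_one a).symm⟩⟩
        · -- merge a with r
          have hrH : r ∈ ℋ := hrhead.1 hbH hrB
          have hmB : a * r ∈ ℬ := mul_mem haB hrB
          have hmA : a * r ∉ 𝒜 := by
            intro hc
            have hmH : a * r ∈ ℋ := hcomp₁ (Subgroup.mem_inf.2 ⟨hc, hmB⟩)
            have he : a = (a * r) * r⁻¹ := by group
            exact haH (he ▸ mul_mem hmH (inv_mem hrH))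
          refine ⟨(a * r) :: R'', by simp, ?_, ?_, ?_, ?_, ?_⟩
          · simp only [List.prod_cons] at hR'prod ⊢
            rw [← hR'prod]; group
          · intro x hx
            rcases List.mem_cons.1 hx with rfl | hx
            · exact Or.inr ⟨hmB, hmA⟩
            · exact hR'let x (List.mem_cons_of_mem _ hx)
          · refine List.isChain_cons.2 ⟨?_, (List.isChain_cons.1 hR'ch).2⟩
            intro t ht
            have hold := (List.isChain_cons.1 hR'ch).1 t ht
            exact ⟨fun hc => hmA hc.1, fun hc => hold.2 ⟨hrB, hc.2⟩⟩
          · rw [hcnt]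
            have e2 : cA 𝒜 ℬ ((a * r) :: R'') = cA 𝒜 ℬ R'' := by
              rw [cA_cons, if_neg (fun hc => hmA hc.1), Nat.add_zero]
            have e3 : cA 𝒜 ℬ (r :: R'') = cA 𝒜 ℬ R'' := by
              rw [cA_cons, if_neg (fun hc => hrA hc.1), Nat.add_zero]
            omega
          · intro a' ha' t ht
            rw [List.head?_cons, Option.mem_some_iff] at ha'; subst ha'
            rw [List.head?_cons, Option.mem_some_iff] at ht; subst ht
            exact ⟨fun hc => absurd hc haH, fun _ => ⟨hmB, a, r, haH, hrH, rfl⟩⟩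

lemma alt_pair_notin {a b : 𝒢}
    (ha : (a ∈ 𝒜 ∧ a ∉ ℬ) ∨ (a ∈ ℬ ∧ a ∉ 𝒜))
    (hb : (b ∈ 𝒜 ∧ b ∉ ℬ) ∨ (b ∈ ℬ ∧ b ∉ 𝒜))
    (hr : ¬(a ∈ 𝒜 ∧ b ∈ 𝒜) ∧ ¬(a ∈ ℬ ∧ b ∈ ℬ)) :
    a * b ∉ 𝒜 ∧ a * b ∉ ℬ := by
  rcases ha with ⟨haA, haB⟩ | ⟨haB, haA⟩ <;> rcases hb with ⟨hbA, hbB⟩ | ⟨hbB, hbA⟩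
  · exact absurd ⟨haA, hbA⟩ hr.1
  · constructor
    · intro hc
      exact hbA (by
        have : b = a⁻¹ * (a * b) := by group
        rw [this]; exact mul_mem (inv_mem haA) hc)
    · intro hc
      exact haB (by
        have : a = (a * b) * b⁻¹ := by group
        rw [this]; exact mul_mem hc (inv_mem hbB))
  · constructor
    · intro hc
      exact haA (by
        have : a = (a * b) * b⁻¹ := by group
        rw [this]; exact mul_mem hc (inv_mem hbA))
    · intro hc
      exact hbB (by
        have : b = a⁻¹ * (a * b) := by group
        rw [this]; exact mul_mem (inv_mem haB) hc)
  · exact absurd ⟨haB, hbB⟩ hr.2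

end EK2

open EK2

/-- **Edo–Kuroda, Corollary 3.10.**  In the amalgamated-product setting, assume moreover
`A ⊆ ℋ`.  If `h ∈ G₀` has a reduced `(𝒜,ℬ)`-decomposition of length `3` of the form
`ℬ𝒜ℬ`, then `h ∈ ⟨H,T⟩` if and only if `h ∈ B·ℋ·B`. -/
theorem length_three_mem_iff {𝒢 : Type*} [Group 𝒢] (𝒜 ℬ ℋ G₀ : Subgroup 𝒢)
    (hgen : 𝒜 ⊔ ℬ = ⊤)
    (hamal : IsAmalgamated (𝒜 : Set 𝒢) (ℬ : Set 𝒢))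
    (hcomp₁ : 𝒜 ⊓ ℬ ≤ ℋ)
    (hcomp₂ : ℋ = (𝒜 ⊓ ℋ) ⊔ (ℬ ⊓ ℋ))
    (hA : 𝒜 ⊓ G₀ ≤ ℋ)
    (h : 𝒢) (hh : h ∈ G₀) (β₁ α β₂ : 𝒢)
    (hβ₁ : β₁ ∈ ((ℬ : Set 𝒢) \ (𝒜 : Set 𝒢)))
    (hβ₂ : β₂ ∈ ((ℬ : Set 𝒢) \ (𝒜 : Set 𝒢)))
    (hα : α ∈ ((𝒜 : Set 𝒢) \ (ℬ : Set 𝒢)))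
    (hprod : h = β₁ * α * β₂) :
    h ∈ (ℋ ⊓ G₀) ⊔ ((𝒜 ⊓ G₀) ⊔ (ℬ ⊓ G₀)) ↔
      h ∈ ((ℬ ⊓ G₀ : Subgroup 𝒢) : Set 𝒢) * (ℋ : Set 𝒢) *
        ((ℬ ⊓ G₀ : Subgroup 𝒢) : Set 𝒢) := by
  have hβ₁B : β₁ ∈ ℬ := hβ₁.1
  have hβ₁A : β₁ ∉ 𝒜 := hβ₁.2
  have hβ₂B : β₂ ∈ ℬ := hβ₂.1
  have hβ₂A : β₂ ∉ 𝒜 := hβ₂.2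
  have hαA : α ∈ 𝒜 := hα.1
  have hαB : α ∉ ℬ := hα.2
  set K : Subgroup 𝒢 := (ℋ ⊓ G₀) ⊔ ((𝒜 ⊓ G₀) ⊔ (ℬ ⊓ G₀)) with hKdef
  have hKG : K ≤ G₀ := sup_le inf_le_right (sup_le inf_le_right inf_le_right)
  have memBHB : ∀ b η b' : 𝒢, b ∈ ℬ ⊓ G₀ → η ∈ ℋ → b' ∈ ℬ ⊓ G₀ →
      (b * η * b') ∈ (((ℬ ⊓ G₀ : Subgroup 𝒢) : Set 𝒢) * (ℋ : Set 𝒢) *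
        ((ℬ ⊓ G₀ : Subgroup 𝒢) : Set 𝒢)) := by
    intro b η b' hb hη hb'
    exact Set.mul_mem_mul (Set.mul_mem_mul hb hη) hb'
  constructor
  · intro hmem
    have hsub : K ≤ (ℋ ⊓ K) ⊔ (ℬ ⊓ K) := by
      refine sup_le ?_ (sup_le ?_ ?_)
      · exact le_trans (le_inf inf_le_left le_sup_left) le_sup_left
      · exact le_trans (le_inf hA (le_trans le_sup_left le_sup_right)) le_sup_left
      · exact le_trans (le_inf inf_le_left (le_trans le_sup_right le_sup_right)) le_sup_right
    have hVB : ∀ x : 𝒢, x ∈ ℬ ⊓ K → x ∈ ℬ ⊓ G₀ := fun x hx =>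
      Subgroup.mem_inf.2 ⟨(Subgroup.mem_inf.1 hx).1, hKG (Subgroup.mem_inf.1 hx).2⟩
    rcases phi_sup (hsub hmem) with hU | hV | ⟨z, hz, hzprod⟩
    · simpa using memBHB 1 h 1 (one_mem _) (Subgroup.mem_inf.1 hU).1 (one_mem _)
    · simpa using memBHB h 1 1 (hVB h hV) (one_mem _) (one_mem _)
    · -- letters facts
      have hlet : ∀ x ∈ z, (x ∈ ℋ ∧ x ∈ ℋ ⊓ K) ∨ (x ∈ ℬ ⊓ G₀ ∧ x ∉ ℋ) := by
        intro x hx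
        rcases hz.2.1 x hx with ⟨h1, h2⟩ | ⟨h1, h2⟩
        · exact Or.inl ⟨(Subgroup.mem_inf.1 h1).1, h1⟩
        · exact Or.inr ⟨hVB x h1, fun hc =>
            h2 (Subgroup.mem_inf.2 ⟨hc, (Subgroup.mem_inf.1 h1).2⟩)⟩
      have pairH : ∀ x y : 𝒢, x ∈ z → y ∈ z →
          (¬(x ∈ ℋ ⊓ K ∧ y ∈ ℋ ⊓ K) ∧ ¬(x ∈ ℬ ⊓ K ∧ y ∈ ℬ ⊓ K)) →
          x ∈ ℋ ∨ y ∈ ℋ := by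
        intro x y hx hy hr
        rcases hlet x hx with hx' | hx'
        · exact Or.inl hx'.1
        · rcases hlet y hy with hy' | hy'
          · exact Or.inr hy'.1
          · exfalso
            rcases hz.2.1 x hx with h1 | h1
            · exact hx'.2 (Subgroup.mem_inf.1 h1.1).1
            · rcases hz.2.1 y hy with h2 | h2
              · exact hy'.2 (Subgroup.mem_inf.1 h2.1).1
              · exact hr.2 ⟨h1.1, h2.1⟩
      by_cases hcH : 2 ≤ z.countP (fun x => decide (x ∈ ℋ))
      · exfalso
        obtain ⟨R, hRne, hRprod, hRlet, hRch, hRcA, -⟩ := build ℋ K hcomp₁ hcomp₂ z hz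
        have hRred : Red 𝒜 ℬ R.reverse := by
          refine ⟨by simpa using hRne, ?_, ?_⟩
          · intro x hx
            rw [List.mem_reverse] at hx
            exact hRlet x hx
          · rw [List.Chain', List.isChain_reverse]
            exact chain'_of_mem
              (P := fun x => (x ∈ 𝒜 ∧ x ∉ ℬ) ∨ (x ∈ ℬ ∧ x ∉ 𝒜))
              (fun a b ha hb hr => alt_pair_notin ha hb hr) R hRlet hRch
        have hvred : Red 𝒜 ℬ [β₂, α, β₁] := by
          refine ⟨by simp, ?_, ?_⟩
          · intro x hx
            rcases List.mem_cons.1 hx with rfl | hx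
            · exact Or.inr ⟨hβ₂B, hβ₂A⟩
            rcases List.mem_cons.1 hx with rfl | hx
            · exact Or.inl ⟨hαA, hαB⟩
            rw [List.mem_singleton] at hx; subst hx
            exact Or.inr ⟨hβ₁B, hβ₁A⟩
          · refine List.isChain_cons_cons.2 ⟨?_, List.isChain_cons_cons.2 ⟨?_, List.isChain_singleton _⟩⟩
            · exact ⟨fun hc => hβ₂A (by
                  have : β₂ = α⁻¹ * (α * β₂) := by group
                  rw [this]; exact mul_mem (inv_mem hαA) hc),
                fun hc => hαB (by
                  have : α = (α * β₂) * β₂⁻¹ := by group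
                  rw [this]; exact mul_mem hc (inv_mem hβ₂B))⟩
            · exact ⟨fun hc => hβ₁A (by
                  have : β₁ = (β₁ * α) * α⁻¹ := by group
                  rw [this]; exact mul_mem hc (inv_mem hαA)),
                fun hc => hαB (by
                  have : α = β₁⁻¹ * (β₁ * α) := by group
                  rw [this]; exact mul_mem (inv_mem hβ₁B) hc)⟩
        have heqp : rprod R.reverse = rprod [β₂, α, β₁] := by
          simp only [rprod, List.reverse_reverse]
          rw [hRprod, hzprod, hprod]
          simp [mul_assoc]
        obtain ⟨-, hcnt⟩ := L1 hamal (min R.reverse.length 3) _ _ hRred hvred heqp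
          (by simp)
        have hc1 : cA 𝒜 ℬ R.reverse = cA 𝒜 ℬ R := (List.reverse_perm R).countP_eq _
        have hc2 : cA 𝒜 ℬ [β₂, α, β₁] = 1 := by
          show cA 𝒜 ℬ (β₂ :: α :: β₁ :: []) = 1
          rw [cA_cons, cA_cons, cA_cons, cA_nil,
            if_neg (show ¬(β₂ ∈ 𝒜 ∧ β₂ ∉ ℬ) from fun hc => hβ₂A hc.1),
            if_pos (show α ∈ 𝒜 ∧ α ∉ ℬ from ⟨hαA, hαB⟩),
            if_neg (show ¬(β₁ ∈ 𝒜 ∧ β₁ ∉ ℬ) from fun hc => hβ₁A hc.1)]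
        omega
      · push_neg at hcH
        rcases z with _ | ⟨x₁, z₁⟩
        · exact absurd rfl hz.1
        rcases z₁ with _ | ⟨x₂, z₂⟩
        · -- single letter
          have hx := hlet x₁ (by simp)
          have hxp : x₁ = h := by simpa using hzprod
          subst hxp
          rcases hx with hx | hx
          · simpa using memBHB 1 x₁ 1 (one_mem _) hx.1 (one_mem _)
          · simpa using memBHB x₁ 1 1 hx.1 (one_mem _) (one_mem _)
        rcases z₂ with _ | ⟨x₃, z₃⟩
        · -- two letters
          have hrel := (List.isChain_cons_cons.1 hz.2.2).1
          have hx₁ := hlet x₁ (by simp)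
          have hx₂ := hlet x₂ (by simp)
          have hxp : x₁ * x₂ = h := by simpa [mul_assoc] using hzprod
          rcases hx₁ with hx₁ | hx₁
          · rcases hx₂ with hx₂ | hx₂
            · exact absurd ⟨hx₁.2, hx₂.2⟩ hrel.1
            · have := memBHB 1 x₁ x₂ (one_mem _) hx₁.1 hx₂.1
              rw [one_mul, hxp] at this; exact this
          · rcases hx₂ with hx₂ | hx₂
            · have := memBHB x₁ x₂ 1 hx₁.1 hx₂.1 (one_mem _)
              rw [mul_one, hxp] at this; exact this
            · exfalso
              rcases hz.2.1 x₁ (by simp) with h1 | h1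
              · exact hx₁.2 (Subgroup.mem_inf.1 h1.1).1
              · rcases hz.2.1 x₂ (by simp) with h2 | h2
                · exact hx₂.2 (Subgroup.mem_inf.1 h2.1).1
                · exact hrel.2 ⟨h1.1, h2.1⟩
        rcases z₃ with _ | ⟨x₄, z₄⟩
        · -- three letters
          have hrel₁ := (List.isChain_cons_cons.1 hz.2.2).1
          have hrel₂ := (List.isChain_cons_cons.1 (List.isChain_cons_cons.1 hz.2.2).2).1
          have hx₁ := hlet x₁ (by simp)
          have hx₂ := hlet x₂ (by simp)
          have hx₃ := hlet x₃ (by simp)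
          have hxp : x₁ * x₂ * x₃ = h := by simpa [mul_assoc] using hzprod
          rcases hx₂ with hx₂ | hx₂
          · -- middle in ℋ : pattern Y X Y
            have hx₁' : x₁ ∈ ℬ ⊓ G₀ := by
              rcases hx₁ with hx₁ | hx₁
              · exact absurd ⟨hx₁.2, hx₂.2⟩ hrel₁.1
              · exact hx₁.1
            have hx₃' : x₃ ∈ ℬ ⊓ G₀ := by
              rcases hx₃ with hx₃ | hx₃
              · exact absurd ⟨hx₂.2, hx₃.2⟩ hrel₂.1
              · exact hx₃.1
            have := memBHB x₁ x₂ x₃ hx₁' hx₂.1 hx₃'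
            rw [hxp] at this; exact this
          · -- middle not in ℋ : x₁, x₃ ∈ ℋ, contradiction with count
            exfalso
            have hx₁H : x₁ ∈ ℋ := by
              rcases pairH x₁ x₂ (by simp) (by simp) hrel₁ with h' | h'
              · exact h'
              · exact absurd h' hx₂.2
            have hx₃H : x₃ ∈ ℋ := by
              rcases pairH x₂ x₃ (by simp) (by simp) hrel₂ with h' | h'
              · exact absurd h' hx₂.2
              · exact h'
            simp [List.countP_cons, hx₁H, hx₃H] at hcH
        · -- at least four letters : at least two ℋ-letters
          exfalso
          have hrel₁ := (List.isChain_cons_cons.1 hz.2.2).1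
          have hrel₂ := (List.isChain_cons_cons.1
            (List.isChain_cons_cons.1 (List.isChain_cons_cons.1 hz.2.2).2).2).1
          have o1 := pairH x₁ x₂ (by simp) (by simp) hrel₁
          have o2 := pairH x₃ x₄ (by simp) (by simp) hrel₂
          rcases o1 with h1 | h1 <;> rcases o2 with h2 | h2 <;>
            simp [List.countP_cons, h1, h2] at hcH <;> omega
  · intro hmem
    rcases hmem with ⟨u, hu, b', hb', rfl⟩
    rcases hu with ⟨b, hb, η, hη, rfl⟩
    have hbB : b ∈ ℬ ⊓ G₀ := hb
    have hb'B : b' ∈ ℬ ⊓ G₀ := hb'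
    have hbG : b ∈ G₀ := (Subgroup.mem_inf.1 hbB).2
    have hb'G : b' ∈ G₀ := (Subgroup.mem_inf.1 hb'B).2
    have hηG : η ∈ G₀ := by
      have he : η = b⁻¹ * (b * η * b') * b'⁻¹ := by group
      rw [he]; exact mul_mem (mul_mem (inv_mem hbG) hh) (inv_mem hb'G)
    have hηHK : η ∈ ℋ ⊓ G₀ := Subgroup.mem_inf.2 ⟨hη, hηG⟩
    have hBK : (ℬ ⊓ G₀ : Subgroup 𝒢) ≤ K := le_sup_right.trans le_sup_right
    have hHK' : (ℋ ⊓ G₀ : Subgroup 𝒢) ≤ K := le_sup_left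
    exact mul_mem (mul_mem (hBK hbB) (hHK' hηHK)) (hBK hb'B)
end

section
/- Let K be a field of characteristic p ≥ 0, let 𝒜 = Aff₂(K), ℬ = BA₂(K), and let I be a subset of {n ∈ ℤ : n ≥ 2}. The following conditions are equivalent: (i) (𝒜∩ℬ)·B^I = B^I·(𝒜∩ℬ); (i') (𝒜∩ℬ)·B^I ⊆ B^I·(𝒜∩ℬ); (ii) for every n ∈ I and all a,b ∈ K, the polynomial (ay+b)^n lies in (⊕_{i∈I} K y^i) ⊕ Ky ⊕ K; (iii) for every n ∈ I, (y+1)^n lies in (⊕_{i∈I} K y^i) ⊕ Ky ⊕ K; (iv) for every n ∈ I and every integer k with 2 ≤ k ≤ n, either the binomial coefficient C(n,k) is zero in K or k ∈ I. -/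
open MvPolynomial Pointwise

noncomputable section

variable {R : Type*} [CommRing R]

section PStable

variable (K : Type*) [Field K]

/-- The subgroup `B^I` of triangular automorphisms `(x + P(y), y)` with `P` in the
`K`-span of `{y^i : i ∈ I}`. -/
def BISet (I : Set ℕ) : Set (PolyAut K 2) :=
  {φ | ∃ P : Polynomial K,
    P ∈ Submodule.span K ((fun i => (Polynomial.X : Polynomial K) ^ i) '' I) ∧
    φ (X 0) = X 0 + Polynomial.aeval (X 1) P ∧ φ (X 1) = X 1}

/-- The subgroup `A^I` generated by the affine subgroup and `B^I`. -/
def AISubgroup (I : Set ℕ) : Subgroup (PolyAut K 2) :=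
  Subgroup.closure (affSet K 2 ∪ BISet K I)

/-- A subset `I` of `{n : n ≥ 2}` is `p`-stable (`p` the characteristic of `K`) if for
every `n ∈ I` and every `2 ≤ k ≤ n`, either `C(n,k) = 0` in `K` or `k ∈ I`. -/
def PStable (I : Set ℕ) : Prop :=
  (∀ n ∈ I, 2 ≤ n) ∧
  ∀ n ∈ I, ∀ k, 2 ≤ k → k ≤ n → ((n.choose k : K) = 0 ∨ k ∈ I)

end PStable



section EdoKurodaAux

variable {F : Type*} [Field F]

/-- Build an automorphism of `K[x,y]` from mutually inverse substitution data. -/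
def mk2 {R : Type*} [CommRing R] (f g : Fin 2 → MvPolynomial (Fin 2) R)
    (hfg : ∀ i, aeval f (g i) = X i) (hgf : ∀ i, aeval g (f i) = X i) :
    PolyAut R 2 :=
  AlgEquiv.ofAlgHom (aeval f) (aeval g)
    (by ext i : 1; simpa using hfg i) (by ext i : 1; simpa using hgf i)

@[simp] lemma mk2_apply {R : Type*} [CommRing R] (f g : Fin 2 → MvPolynomial (Fin 2) R)
    (hfg hgf) (i : Fin 2) : mk2 f g hfg hgf (X i) = f i := by
  simp [mk2]

/-- The triangular automorphism `(x + P(y), y)`. -/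
def psiB {R : Type*} [CommRing R] (P : Polynomial R) : PolyAut R 2 :=
  mk2 ![X 0 + Polynomial.aeval (X 1) P, X 1] ![X 0 - Polynomial.aeval (X 1) P, X 1]
    (by
      intro i
      fin_cases i <;>
        simp [← Polynomial.aeval_algHom_apply, sub_add_cancel])
    (by
      intro i
      fin_cases i <;>
        simp [← Polynomial.aeval_algHom_apply, add_sub_cancel_right])

@[simp] lemma psiB_X0 {R : Type*} [CommRing R] (P : Polynomial R) :
    psiB P (X 0) = X 0 + Polynomial.aeval (X 1) P := by
  simp [psiB]

@[simp] lemma psiB_X1 {R : Type*} [CommRing R] (P : Polynomial R) :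
    psiB P (X 1) = X 1 := by
  simp [psiB]

/-- The affine triangular automorphism `(a x + b y + c, d y + e)`. -/
def phiAff (a b c d e : F) (ha : a ≠ 0) (hd : d ≠ 0) : PolyAut F 2 :=
  mk2 ![C a * X 0 + C b * X 1 + C c, C d * X 1 + C e]
    ![C a⁻¹ * (X 0 - C b * (C d⁻¹ * (X 1 - C e)) - C c), C d⁻¹ * (X 1 - C e)]
    (by
      have haa : (C a * C a⁻¹ : MvPolynomial (Fin 2) F) = 1 := by
        rw [← C_mul, mul_inv_cancel₀ ha, C_1]
      have hdd : (C d * C d⁻¹ : MvPolynomial (Fin 2) F) = 1 := by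
        rw [← C_mul, mul_inv_cancel₀ hd, C_1]
      intro i
      fin_cases i
      · simp
        linear_combination X 0 * haa - C a⁻¹ * C b * X 1 * hdd
      · simp
        linear_combination X 1 * hdd)
    (by
      have haa : (C a * C a⁻¹ : MvPolynomial (Fin 2) F) = 1 := by
        rw [← C_mul, mul_inv_cancel₀ ha, C_1]
      have hdd : (C d * C d⁻¹ : MvPolynomial (Fin 2) F) = 1 := by
        rw [← C_mul, mul_inv_cancel₀ hd, C_1]
      intro i
      fin_cases i
      · simp
        linear_combination (X 0 - C b * C d⁻¹ * X 1 + C b * C d⁻¹ * C e - C c) * haa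
      · simp
        linear_combination (X 1 - C e) * hdd)

@[simp] lemma phiAff_X0 (a b c d e : F) (ha hd) :
    phiAff a b c d e ha hd (X 0) = C a * X 0 + C b * X 1 + C c := by simp [phiAff]

@[simp] lemma phiAff_X1 (a b c d e : F) (ha hd) :
    phiAff a b c d e ha hd (X 1) = C d * X 1 + C e := by simp [phiAff]

lemma polyAut_mul_apply {R : Type*} [CommRing R] (σ τ : PolyAut R 2)
    (f : MvPolynomial (Fin 2) R) : (σ * τ) f = σ (τ f) := rfl

lemma polyAut_ext {R : Type*} [CommRing R] {σ τ : PolyAut R 2}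
    (h : ∀ i, σ (X i) = τ (X i)) : σ = τ :=
  AlgEquiv.coe_algHom_injective (MvPolynomial.algHom_ext h)

lemma phiAff_mem (a b c d e : F) (ha : a ≠ 0) (hd : d ≠ 0) :
    phiAff a b c d e ha hd ∈ affSet F 2 ∩ triSet F 2 := by
  constructor
  · refine ⟨!![a, 0; b, d], ![c, e], ?_, ?_⟩
    · simp [Matrix.det_fin_two_of, isUnit_iff_ne_zero, ha, hd]
    · intro i
      fin_cases i <;> simp [Fin.sum_univ_two]
  · intro i
    fin_cases i
    · have huniv : {j : Fin 2 | (0 : Fin 2) ≤ j} = Set.univ :=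
        Set.eq_univ_of_forall fun j => Fin.zero_le j
      show _ ∈ supported F {j : Fin 2 | (0 : Fin 2) ≤ j}
      rw [huniv, supported_univ]
      trivial
    · show phiAff a b c d e ha hd (X 1) ∈ supported F {j : Fin 2 | (1 : Fin 2) ≤ j}
      rw [phiAff_X1]
      have hC : ∀ r : F, C r ∈ supported F {j : Fin 2 | (1 : Fin 2) ≤ j} := by
        intro r
        have := Subalgebra.algebraMap_mem (supported F {j : Fin 2 | (1 : Fin 2) ≤ j}) r
        rwa [MvPolynomial.algebraMap_eq] at this
      exact Subalgebra.add_mem _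
        (Subalgebra.mul_mem _ (hC d) (X_mem_supported.mpr (by simp))) (hC e)

lemma affTri_elim {σ : PolyAut F 2} (h : σ ∈ affSet F 2 ∩ triSet F 2) :
    ∃ a b c d e : F, a ≠ 0 ∧ d ≠ 0 ∧
      σ (X 0) = C a * X 0 + C b * X 1 + C c ∧ σ (X 1) = C d * X 1 + C e := by
  obtain ⟨⟨M, bv, hdet, hform⟩, htri⟩ := h
  have h0 := hform 0
  have h1 := hform 1
  rw [Fin.sum_univ_two] at h0 h1
  have hm : M 0 1 = 0 := by
    by_contra hm
    have hcoeff : coeff (Finsupp.single 0 1) (σ (X 1)) = M 0 1 := by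
      rw [h1]
      simp [MvPolynomial.coeff_X', Finsupp.single_eq_single_iff]
      intro h0eq
      have := DFunLike.congr_fun h0eq (0 : Fin 2)
      simp at this
    have h0v : (0 : Fin 2) ∈ (σ (X 1)).vars := by
      rw [MvPolynomial.mem_vars]
      exact ⟨Finsupp.single 0 1, by rwa [MvPolynomial.mem_support_iff, hcoeff], by simp⟩
    have hmem := (MvPolynomial.mem_supported.mp (htri 1)) h0v
    simp only [Set.mem_setOf_eq] at hmem
    exact absurd hmem (by decide)
  rw [Matrix.det_fin_two, hm, zero_mul, sub_zero] at hdet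
  have hprod := isUnit_iff_ne_zero.mp hdet
  refine ⟨M 0 0, M 1 0, bv 0, M 1 1, bv 1, ?_, ?_, by rw [h0], ?_⟩
  · exact fun h => hprod (by rw [h, zero_mul])
  · exact fun h => hprod (by rw [h, mul_zero])
  · rw [h1, hm]
    simp

lemma psiB_mem {I : Set ℕ} {P : Polynomial F}
    (hP : P ∈ Submodule.span F ((fun i => (Polynomial.X : Polynomial F) ^ i) '' I)) :
    psiB P ∈ BISet F I :=
  ⟨P, hP, psiB_X0 P, psiB_X1 P⟩

lemma span_pow_coeff {S : Set ℕ} {p : Polynomial F}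
    (hp : p ∈ Submodule.span F ((fun i => (Polynomial.X : Polynomial F) ^ i) '' S))
    {k : ℕ} (hk : p.coeff k ≠ 0) : k ∈ S := by
  classical
  let M : Submodule F (Polynomial F) :=
    { carrier := {q | ∀ m, q.coeff m ≠ 0 → m ∈ S}
      add_mem' := by
        intro q r hq hr m hm
        rw [Polynomial.coeff_add] at hm
        by_cases h : q.coeff m = 0
        · exact hr m (by rwa [h, zero_add] at hm)
        · exact hq m h
      zero_mem' := by intro m hm; simp at hm
      smul_mem' := by
        intro c q hq m hm
        rw [Polynomial.coeff_smul, smul_eq_mul] at hm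
        exact hq m (right_ne_zero_of_mul hm) }
  have hMp : p ∈ M := by
    refine Submodule.span_le.mpr ?_ hp
    rintro _ ⟨i, hi, rfl⟩ m hm
    rw [Polynomial.coeff_X_pow] at hm
    obtain rfl : m = i := by by_contra h; simp [h] at hm
    exact hi
  exact hMp k hk

lemma commute_key (I : Set ℕ)
    (h2 : ∀ n ∈ I, ∀ a b : F, (Polynomial.C a * Polynomial.X + Polynomial.C b) ^ n ∈
        Submodule.span F
          (((fun i => (Polynomial.X : Polynomial F) ^ i) '' I) ∪ {Polynomial.X, 1}))
    {P : Polynomial F}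
    (hP : P ∈ Submodule.span F ((fun i => (Polynomial.X : Polynomial F) ^ i) '' I))
    (u v : F) :
    Polynomial.aeval (Polynomial.C u * Polynomial.X + Polynomial.C v) P ∈
      Submodule.span F
        (((fun i => (Polynomial.X : Polynomial F) ^ i) '' I) ∪ {Polynomial.X, 1}) := by
  have h1 := Submodule.apply_mem_span_image_of_mem_span
    (Polynomial.aeval (Polynomial.C u * Polynomial.X + Polynomial.C v) :
      Polynomial F →ₐ[F] Polynomial F).toLinearMap hP
  refine Submodule.span_le.mpr ?_ h1
  rintro _ ⟨_, ⟨i, hi, rfl⟩, rfl⟩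
  simp only [AlgHom.toLinearMap_apply, map_pow, Polynomial.aeval_X_left_apply,
    Polynomial.aeval_X, Polynomial.aeval_C]
  exact h2 i hi u v

end EdoKurodaAux


/-- **Edo–Kuroda, Proposition 4.1.**  Equivalent characterisations of `p`-stability of a
subset `I ⊆ {n : n ≥ 2}`, over a field `K` of characteristic `p ≥ 0`. -/
theorem pStable_tfae (K : Type*) [Field K] (I : Set ℕ) (hI : ∀ n ∈ I, 2 ≤ n) :
    [ -- (i)
      (affSet K 2 ∩ triSet K 2) * BISet K I = BISet K I * (affSet K 2 ∩ triSet K 2),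
      -- (i')
      (affSet K 2 ∩ triSet K 2) * BISet K I ⊆ BISet K I * (affSet K 2 ∩ triSet K 2),
      -- (ii)
      ∀ n ∈ I, ∀ a b : K, (Polynomial.C a * Polynomial.X + Polynomial.C b) ^ n ∈
        Submodule.span K
          (((fun i => (Polynomial.X : Polynomial K) ^ i) '' I) ∪ {Polynomial.X, 1}),
      -- (iii)
      ∀ n ∈ I, ((Polynomial.X : Polynomial K) + 1) ^ n ∈
        Submodule.span K
          (((fun i => (Polynomial.X : Polynomial K) ^ i) '' I) ∪ {Polynomial.X, 1}),
      -- (iv)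
      ∀ n ∈ I, ∀ k, 2 ≤ k → k ≤ n → ((n.choose k : K) = 0 ∨ k ∈ I) ].TFAE := by
  classical
  tfae_have 1 → 2 := fun h => h.subset
  tfae_have 2 → 4 := by
    intro h n hn
    have hP : (Polynomial.X : Polynomial K) ^ n ∈
        Submodule.span K ((fun i => (Polynomial.X : Polynomial K) ^ i) '' I) :=
      Submodule.subset_span ⟨n, hn, rfl⟩
    have hmem := h (Set.mul_mem_mul
      (phiAff_mem (1 : K) 0 0 1 1 one_ne_zero one_ne_zero) (psiB_mem hP))
    rw [Set.mem_mul] at hmem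
    obtain ⟨ψ', hψ', φ', hφ', heq⟩ := hmem
    obtain ⟨P', hP', hb0, hb1⟩ := hψ'
    obtain ⟨a', b', c', d', e', ha', hd', hx0, hx1⟩ := affTri_elim hφ'
    have happ : ψ' (φ' (X 0)) =
        (phiAff (1 : K) 0 0 1 1 one_ne_zero one_ne_zero)
          (psiB ((Polynomial.X : Polynomial K) ^ n) (X 0)) := by
      rw [← polyAut_mul_apply, ← polyAut_mul_apply, heq]
    rw [hx0, psiB_X0] at happ
    have hψC : ∀ r : K, ψ' (C r) = C r := by
      intro r
      have := ψ'.commutes r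
      rwa [MvPolynomial.algebraMap_eq] at this
    rw [map_add, map_add, map_mul, map_mul, hψC, hψC, hψC, hb0, hb1] at happ
    have hπ := congrArg (aeval ![(0 : Polynomial K), Polynomial.X]) happ
    simp only [map_add, map_mul, map_pow, phiAff_X0, phiAff_X1, aeval_X,
      Matrix.cons_val_zero, Matrix.cons_val_one, Matrix.head_cons, MvPolynomial.aeval_C,
      Polynomial.algebraMap_eq, ← Polynomial.aeval_algHom_apply,
      Polynomial.aeval_X_left_apply, Polynomial.aeval_X, mul_zero, zero_add, add_zero, C_0, C_1,
      map_one, map_zero, Polynomial.C_0, Polynomial.C_1, one_mul, zero_mul] at hπ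
    rw [← hπ]
    refine Submodule.add_mem _ (Submodule.add_mem _ ?_ ?_) ?_
    · rw [← Polynomial.smul_eq_C_mul]
      exact Submodule.smul_mem _ _
        (Submodule.span_mono Set.subset_union_left hP')
    · rw [← Polynomial.smul_eq_C_mul]
      exact Submodule.smul_mem _ _
        (Submodule.subset_span (Or.inr (Set.mem_insert _ _)))
    · have : (Polynomial.C c' : Polynomial K) = c' • 1 := by
        rw [Polynomial.smul_eq_C_mul, mul_one]
      rw [this]
      exact Submodule.smul_mem _ _ (Submodule.subset_span (Or.inr (by simp)))
  tfae_have 4 → 5 := by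
    intro h n hn k hk2 hkn
    by_cases hc : ((n.choose k : K)) = 0
    · exact Or.inl hc
    right
    have hsub : ((fun i => (Polynomial.X : Polynomial K) ^ i) '' I) ∪ {Polynomial.X, 1}
        ⊆ (fun i => (Polynomial.X : Polynomial K) ^ i) '' (I ∪ {0, 1}) := by
      rintro p (⟨i, hi, rfl⟩ | hp)
      · exact ⟨i, Or.inl hi, rfl⟩
      · simp only [Set.mem_insert_iff, Set.mem_singleton_iff] at hp
        rcases hp with rfl | rfl
        · exact ⟨1, Or.inr (by simp), pow_one _⟩
        · exact ⟨0, Or.inr (by simp), pow_zero _⟩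
    have hmem := Submodule.span_mono hsub (h n hn)
    have hco : (((Polynomial.X : Polynomial K) + 1) ^ n).coeff k ≠ 0 := by
      rw [Polynomial.coeff_X_add_one_pow]
      exact hc
    have hk := span_pow_coeff hmem hco
    rcases hk with hk | hk
    · exact hk
    · simp only [Set.mem_insert_iff, Set.mem_singleton_iff] at hk
      omega
  tfae_have 5 → 3 := by
    intro h n hn a b
    rw [add_pow]
    refine Submodule.sum_mem _ ?_
    intro k hk
    rw [Finset.mem_range, Nat.lt_succ_iff] at hk
    have hterm : (Polynomial.C a * Polynomial.X) ^ k * Polynomial.C b ^ (n - k) *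
        ((n.choose k : ℕ) : Polynomial K)
        = (a ^ k * b ^ (n - k) * (n.choose k : K)) • (Polynomial.X : Polynomial K) ^ k := by
      rw [Polynomial.smul_eq_C_mul, map_mul, map_mul, map_pow, map_pow,
        Polynomial.C_eq_natCast, mul_pow]
      ring
    rw [hterm]
    rcases Nat.lt_or_ge k 2 with hk2 | hk2
    · interval_cases k
      · exact Submodule.smul_mem _ _ (Submodule.subset_span (Or.inr (by simp)))
      · exact Submodule.smul_mem _ _ (Submodule.subset_span (Or.inr (by simp)))
    · rcases h n hn k hk2 hk with hc | hkI
      · rw [hc, mul_zero, zero_smul]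
        exact Submodule.zero_mem _
      · exact Submodule.smul_mem _ _ (Submodule.subset_span (Or.inl ⟨k, hkI, rfl⟩))
  tfae_have 3 → 1 := by
    intro h2
    ext σ
    simp only [Set.mem_mul]
    constructor
    · rintro ⟨φ, hφ, ψ, hψ, rfl⟩
      obtain ⟨a, b, c, d, e, ha, hd, hx0, hx1⟩ := affTri_elim hφ
      obtain ⟨P, hPspan, hq0, hq1⟩ := hψ
      have hQ := commute_key I h2 hPspan d e
      rw [Submodule.span_union] at hQ
      obtain ⟨Q₀, hQ₀, r, hr, hQsum⟩ := Submodule.mem_sup.mp hQ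
      obtain ⟨lam, mu, hlm⟩ := Submodule.mem_span_pair.mp hr
      refine ⟨psiB (a⁻¹ • Q₀), psiB_mem (Submodule.smul_mem _ _ hQ₀),
        phiAff a (b + lam) (c + mu) d e ha hd, phiAff_mem _ _ _ _ _ ha hd, ?_⟩
      have haa : (C a * C a⁻¹ : MvPolynomial (Fin 2) K) = 1 := by
        rw [← C_mul, mul_inv_cancel₀ ha, C_1]
      have hkey : Polynomial.aeval ((C d : MvPolynomial (Fin 2) K) * X 1 + C e) P
          = Polynomial.aeval (X 1 : MvPolynomial (Fin 2) K) Q₀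
            + C lam * X 1 + C mu := by
        have h1 : Polynomial.aeval ((X 1 : MvPolynomial (Fin 2) K))
            (Polynomial.C d * Polynomial.X + Polynomial.C e) = C d * X 1 + C e := by
          simp [MvPolynomial.algebraMap_eq]
        calc Polynomial.aeval ((C d : MvPolynomial (Fin 2) K) * X 1 + C e) P
            = Polynomial.aeval (X 1 : MvPolynomial (Fin 2) K)
                (Polynomial.aeval (Polynomial.C d * Polynomial.X + Polynomial.C e) P) := by
              rw [← h1, ← Polynomial.aeval_algHom_apply]
          _ = _ := by
              rw [← hQsum, ← hlm]
              simp only [map_add, map_smul, Polynomial.aeval_X, map_one,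
                MvPolynomial.smul_eq_C_mul, mul_one]
              ring
      apply polyAut_ext
      have hψ'C : ∀ r : K, psiB (a⁻¹ • Q₀) (C r) = C r := by
        intro r
        have := (psiB (a⁻¹ • Q₀)).commutes r
        rwa [MvPolynomial.algebraMap_eq] at this
      have hφC : ∀ r : K, φ (C r) = C r := by
        intro r
        have := φ.commutes r
        rwa [MvPolynomial.algebraMap_eq] at this
      intro i
      fin_cases i
      · show (psiB (a⁻¹ • Q₀) * phiAff a (b + lam) (c + mu) d e ha hd) (X 0) = (φ * ψ) (X 0)
        rw [polyAut_mul_apply, polyAut_mul_apply, hq0, map_add, hx0, phiAff_X0,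
          ← Polynomial.aeval_algHom_apply, hx1, hkey,
          map_add, map_add, map_mul, map_mul, hψ'C, hψ'C, hψ'C, psiB_X0, psiB_X1,
          map_smul, MvPolynomial.smul_eq_C_mul, map_add]
        simp only [C_add]
        linear_combination (Polynomial.aeval (X 1 : MvPolynomial (Fin 2) K) Q₀) * haa
      · show (psiB (a⁻¹ • Q₀) * phiAff a (b + lam) (c + mu) d e ha hd) (X 1) = (φ * ψ) (X 1)
        rw [polyAut_mul_apply, polyAut_mul_apply, hq1, hx1, phiAff_X1,
          map_add, map_mul, hψ'C, hψ'C, psiB_X1]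
    · rintro ⟨ψ, hψ, φ, hφ, rfl⟩
      obtain ⟨a, b, c, d, e, ha, hd, hx0, hx1⟩ := affTri_elim hφ
      obtain ⟨P, hPspan, hq0, hq1⟩ := hψ
      have hR : a • Polynomial.aeval
            (Polynomial.C d⁻¹ * Polynomial.X + Polynomial.C (-(d⁻¹ * e))) P ∈
          Submodule.span K
            (((fun i => (Polynomial.X : Polynomial K) ^ i) '' I) ∪ {Polynomial.X, 1}) :=
        Submodule.smul_mem _ _ (commute_key I h2 hPspan d⁻¹ (-(d⁻¹ * e)))
      rw [Submodule.span_union] at hR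
      obtain ⟨R₀, hR₀, r, hr, hRsum⟩ := Submodule.mem_sup.mp hR
      obtain ⟨lam, mu, hlm⟩ := Submodule.mem_span_pair.mp hr
      refine ⟨phiAff a (b + lam * d) (c + lam * e + mu) d e ha hd,
        phiAff_mem _ _ _ _ _ ha hd, psiB R₀, psiB_mem hR₀, ?_⟩
      have hdd : (C d⁻¹ * C d : MvPolynomial (Fin 2) K) = 1 := by
        rw [← C_mul, inv_mul_cancel₀ hd, C_1]
      have hkey : Polynomial.aeval ((C d : MvPolynomial (Fin 2) K) * X 1 + C e) R₀
          = C a * Polynomial.aeval (X 1 : MvPolynomial (Fin 2) K) P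
            - (C lam * (C d * X 1 + C e) + C mu) := by
        have hg : Polynomial.aeval ((C d : MvPolynomial (Fin 2) K) * X 1 + C e)
            (Polynomial.C d⁻¹ * Polynomial.X + Polynomial.C (-(d⁻¹ * e))) = X 1 := by
          simp only [map_add, map_mul, Polynomial.aeval_X, Polynomial.aeval_C,
            MvPolynomial.algebraMap_eq, map_neg, C_mul]
          linear_combination (X 1 : MvPolynomial (Fin 2) K) * hdd
        have h3 := congrArg
          (Polynomial.aeval ((C d : MvPolynomial (Fin 2) K) * X 1 + C e)) hRsum
        rw [map_add, map_smul, ← Polynomial.aeval_algHom_apply, hg, ← hlm,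
          map_add, map_smul, map_smul, Polynomial.aeval_X, map_one,
          MvPolynomial.smul_eq_C_mul, MvPolynomial.smul_eq_C_mul,
          MvPolynomial.smul_eq_C_mul, mul_one] at h3
        linear_combination h3
      apply polyAut_ext
      have hψC : ∀ r : K, ψ (C r) = C r := by
        intro r
        have := ψ.commutes r
        rwa [MvPolynomial.algebraMap_eq] at this
      intro i
      fin_cases i
      · show (phiAff a (b + lam * d) (c + lam * e + mu) d e ha hd * psiB R₀) (X 0)
            = (ψ * φ) (X 0)
        rw [polyAut_mul_apply, polyAut_mul_apply, psiB_X0, map_add, phiAff_X0,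
          ← Polynomial.aeval_algHom_apply, phiAff_X1, hkey, hx0]
        simp only [map_add, map_mul, hψC, hq0, hq1, C_add, C_mul]
        ring
      · show (phiAff a (b + lam * d) (c + lam * e + mu) d e ha hd * psiB R₀) (X 1)
            = (ψ * φ) (X 1)
        rw [polyAut_mul_apply, polyAut_mul_apply, psiB_X1, phiAff_X1, hx1,
          map_add, map_mul, hψC, hψC, hq1]
  tfae_finish
end
end

section
/- Let p be a prime and let n, k be positive integers. Then the sets pⁿ·{1,…,k} = {pⁿ m : 1 ≤ m ≤ k} and pⁿ·ℕ₊ = {pⁿ m : m ≥ 1} are p-stable: for every element m of the set and every integer j with 2 ≤ j ≤ m, either p divides the binomial coefficient C(m,j) or j belongs to the set. -/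
lemma aux_pow_dvd (p : ℕ) (hp : p.Prime) :
    ∀ n m j : ℕ, p ^ n ∣ m → ¬ p ∣ m.choose j → p ^ n ∣ j := by
  intro n
  induction n with
  | zero => intro m j _ _; simp
  | succ n ih =>
    intro m j hm hnd
    haveI : Fact p.Prime := ⟨hp⟩
    have hpm : p ∣ m := dvd_trans (dvd_pow_self p (Nat.succ_ne_zero n)) hm
    have hl := Choose.choose_modEq_choose_mod_mul_choose_div_nat (p := p) (n := m) (k := j)
    have hmp : m % p = 0 := Nat.eq_zero_of_dvd_of_lt ((Nat.dvd_mod_iff dvd_rfl).mpr hpm)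
      (Nat.mod_lt m hp.pos)
    rw [hmp] at hl
    have hnd' : ¬ p ∣ (Nat.choose 0 (j % p) * Nat.choose (m / p) (j / p)) := by
      intro h
      exact hnd (Nat.modEq_zero_iff_dvd.mp (hl.trans (Nat.modEq_zero_iff_dvd.mpr h)))
    have hjp : j % p = 0 := by
      by_contra h
      rw [Nat.choose_eq_zero_of_lt (Nat.pos_of_ne_zero h)] at hnd'
      exact hnd' (by simp)
    rw [hjp, Nat.choose_self, one_mul] at hnd'
    have h1 : p ^ n ∣ j / p := ih (m / p) (j / p)
      ((Nat.dvd_div_iff_mul_dvd hpm).mpr (by rwa [← pow_succ'])) hnd'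
    have : p ^ (n + 1) ∣ (j / p) * p := by
      rw [pow_succ]
      exact mul_dvd_mul h1 dvd_rfl
    rwa [Nat.div_mul_cancel (Nat.dvd_of_mod_eq_zero hjp)] at this

/-- **Edo–Kuroda, Remark 4.2 (3).**  For a prime `p` and positive integers `n, k`, the sets
`pⁿ·{1,…,k}` and `pⁿ·ℕ₊` are `p`-stable: for every element `m` of the set and every integer
`j` with `2 ≤ j ≤ m`, either `p` divides `C(m,j)` or `j` belongs to the set. -/
theorem pow_mul_sets_pStable (p : ℕ) (hp : p.Prime) (n k : ℕ) (hn : 0 < n) (hk : 0 < k) :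
    (∀ m ∈ {m : ℕ | ∃ l, 1 ≤ l ∧ l ≤ k ∧ m = p ^ n * l},
      ∀ j, 2 ≤ j → j ≤ m →
        p ∣ m.choose j ∨ j ∈ {m : ℕ | ∃ l, 1 ≤ l ∧ l ≤ k ∧ m = p ^ n * l}) ∧
    (∀ m ∈ {m : ℕ | ∃ l, 1 ≤ l ∧ m = p ^ n * l},
      ∀ j, 2 ≤ j → j ≤ m →
        p ∣ m.choose j ∨ j ∈ {m : ℕ | ∃ l, 1 ≤ l ∧ m = p ^ n * l}) := by
  have key : ∀ l j : ℕ, 1 ≤ l → 2 ≤ j → j ≤ p ^ n * l →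
      p ∣ (p ^ n * l).choose j ∨ ∃ l', 1 ≤ l' ∧ l' ≤ l ∧ j = p ^ n * l' := by
    intro l j hl hj hjm
    by_cases hd : p ∣ (p ^ n * l).choose j
    · exact Or.inl hd
    · right
      have hdj : p ^ n ∣ j := aux_pow_dvd p hp n (p ^ n * l) j ⟨l, rfl⟩ hd
      obtain ⟨l', rfl⟩ := hdj
      have hpn : 0 < p ^ n := pow_pos hp.pos n
      refine ⟨l', Nat.pos_of_ne_zero (by rintro rfl; simp at hj), ?_, rfl⟩
      exact Nat.le_of_mul_le_mul_left hjm hpn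
  constructor
  · rintro m ⟨l, hl1, hlk, rfl⟩ j hj hjm
    rcases key l j hl1 hj hjm with h | ⟨l', h1, h2, h3⟩
    · exact Or.inl h
    · exact Or.inr ⟨l', h1, le_trans h2 hlk, h3⟩
  · rintro m ⟨l, hl1, rfl⟩ j hj hjm
    rcases key l j hl1 hj hjm with h | ⟨l', h1, _, h3⟩
    · exact Or.inl h
    · exact Or.inr ⟨l', h1, h3⟩
end
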